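/- arXiv:2406.11302 — 3 statements merged into one kernel-verified Lean document; each statement's English description precedes it below -/
import Mathlib

section
/- Let N be a square-free positive integer. Then for all integers a, b, the Kloosterman sum K(a, b, N) is nonzero. -/
open scoped BigOperators

/-- The Kloosterman sum `K(a,b,c) = ∑_{x mod c, gcd(x,c)=1} e((a x + b x̄)/c)`,
where `x̄` is the inverse of `x` modulo `c`. -/
noncomputable def kloosterman (a b : ℤ) (c : ℕ) : ℂ :=
  ∑ x ∈ (Finset.range c).filter (fun x => Nat.gcd x c = 1),
    Complex.exp (2 * Real.pi * Complex.I *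
      (((a * (x : ℤ) + b * ((((x : ZMod c)⁻¹ : ZMod c)).val : ℤ) : ℤ) : ℂ) / (c : ℂ)))

open Complex Polynomial

/-- The additive character `m ↦ e(m/c)`. -/
noncomputable def eC (c : ℕ) (m : ℤ) : ℂ := Complex.exp (2 * Real.pi * Complex.I * m / c)

lemma eC_add (c : ℕ) (m n : ℤ) : eC c (m + n) = eC c m * eC c n := by
  rw [eC, eC, eC, ← Complex.exp_add]
  congr 1
  push_cast
  ring

lemma eC_int_mul (c : ℕ) (hc : c ≠ 0) (k : ℤ) : eC c (c * k) = 1 := by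
  rw [eC]
  rw [show 2 * Real.pi * Complex.I * (((c : ℤ) * k : ℤ) : ℂ) / c = k * (2 * Real.pi * Complex.I) by
    have : (c : ℂ) ≠ 0 := Nat.cast_ne_zero.mpr hc
    push_cast
    field_simp]
  exact Complex.exp_int_mul_two_pi_mul_I k

lemma eC_congr {c : ℕ} (hc : c ≠ 0) {m n : ℤ} (h : m ≡ n [ZMOD c]) : eC c m = eC c n := by
  obtain ⟨k, hk⟩ : (c:ℤ) ∣ n - m := (Int.ModEq.dvd h)
  have : n = m + c * k := by linarith
  rw [this, eC_add, eC_int_mul c hc, mul_one]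

lemma eC_cancel (m n : ℕ) (hn : n ≠ 0) (z : ℤ) : eC (m * n) (n * z) = eC m z := by
  rcases eq_or_ne m 0 with rfl | hm
  · simp only [Nat.zero_mul, eC, Nat.cast_zero, div_zero]
  rw [eC, eC]
  congr 1
  have h1 : (n : ℂ) ≠ 0 := Nat.cast_ne_zero.mpr hn
  have h2 : (m : ℂ) ≠ 0 := Nat.cast_ne_zero.mpr hm
  push_cast
  field_simp

/-- The Kloosterman sum as a sum over units. -/
lemma kloosterman_eq (a b : ℤ) (c : ℕ) [NeZero c] :
    kloosterman a b c = ∑ x : (ZMod c)ˣ,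
      eC c (a * (((x : ZMod c)).val : ℤ) + b * ((((x⁻¹ : (ZMod c)ˣ) : ZMod c)).val : ℤ)) := by
  rw [kloosterman]
  refine Finset.sum_bij'
    (i := fun x hx => ZMod.unitOfCoprime x (by simpa using (Finset.mem_filter.mp hx).2))
    (j := fun u _ => ((u : ZMod c)).val) ?_ ?_ ?_ ?_ ?_
  · intro a ha; exact Finset.mem_univ _
  · intro u hu
    refine Finset.mem_filter.mpr ⟨Finset.mem_range.mpr (ZMod.val_lt _), ?_⟩
    exact ZMod.val_coe_unit_coprime u
  · intro x hx
    have hlt := Finset.mem_range.mp (Finset.mem_filter.mp hx).1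
    simp [ZMod.coe_unitOfCoprime, ZMod.val_cast_of_lt hlt]
  · intro u hu
    apply Units.ext
    simp [ZMod.coe_unitOfCoprime, ZMod.natCast_val, ZMod.cast_id]
  · intro x hx
    have hlt := Finset.mem_range.mp (Finset.mem_filter.mp hx).1
    have key : (a * (x:ℤ) + b * ((((x : ZMod c)⁻¹ : ZMod c)).val : ℤ)) =
        a * ((((ZMod.unitOfCoprime x (by simpa using (Finset.mem_filter.mp hx).2) : (ZMod c)ˣ) : ZMod c)).val : ℤ)
        + b * (((((ZMod.unitOfCoprime x (by simpa using (Finset.mem_filter.mp hx).2) : (ZMod c)ˣ))⁻¹ : (ZMod c)ˣ) : ZMod c).val : ℤ) := by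
      rw [← ZMod.inv_coe_unit, ZMod.coe_unitOfCoprime, ZMod.val_cast_of_lt hlt]
    rw [key, eC, mul_div_assoc]

/-- Nonvanishing for prime modulus, for all `a`, `b`. -/
lemma kloosterman_prime_ne_zero (p : ℕ) (hp : p.Prime) (a b : ℤ) :
    kloosterman a b p ≠ 0 := by
  haveI : Fact p.Prime := ⟨hp⟩
  haveI : NeZero p := ⟨hp.ne_zero⟩
  rw [kloosterman_eq]
  have hp0 : (p : ℤ) ≠ 0 := by exact_mod_cast hp.ne_zero
  set m : (ZMod p)ˣ → ℤ := fun x =>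
    a * (((x : ZMod p)).val : ℤ) + b * ((((x⁻¹ : (ZMod p)ˣ) : ZMod p)).val : ℤ) with hm
  set ζ : ℂ := Complex.exp (2 * Real.pi * Complex.I / p) with hζdef
  have hζ : IsPrimitiveRoot ζ p := Complex.isPrimitiveRoot_exp p hp.ne_zero
  set A : ℤ[X] := ∑ x : (ZMod p)ˣ, (X : ℤ[X]) ^ (m x % p).toNat with hA
  have haevalA : (aeval ζ) A = ∑ x : (ZMod p)ˣ, eC p (m x) := by
    rw [hA, map_sum]
    refine Finset.sum_congr rfl fun x _ => ?_
    rw [map_pow, aeval_X]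
    have h1 : ζ ^ (m x % p).toNat = eC p ((m x % p).toNat : ℤ) := by
      rw [eC, hζdef, ← Complex.exp_nat_mul]
      congr 1
      push_cast
      ring
    rw [h1]
    exact eC_congr hp.ne_zero (by
      have : ((m x % p).toNat : ℤ) = m x % p := Int.toNat_of_nonneg (Int.emod_nonneg _ hp0)
      rw [Int.ModEq, this, Int.emod_emod_of_dvd _ dvd_rfl])
  intro h0
  have hzero : (aeval ζ) (A.map (algebraMap ℤ ℚ)) = 0 := by
    rw [aeval_map_algebraMap, haevalA, h0]
  have hdvd : cyclotomic p ℚ ∣ A.map (algebraMap ℤ ℚ) :=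
    (cyclotomic_eq_minpoly_rat hζ hp.pos) ▸ minpoly.dvd ℚ ζ hzero
  have hdvdZ : cyclotomic p ℤ ∣ A := by
    rw [← map_cyclotomic_int p ℚ] at hdvd
    exact (Polynomial.map_dvd_map (algebraMap ℤ ℚ) (algebraMap ℤ ℚ).injective_int
      (cyclotomic.monic p ℤ)).mp hdvd
  have heval : A.eval 1 = (p : ℤ) - 1 := by
    rw [hA, Polynomial.eval_finset_sum]
    simp only [eval_pow, eval_X, one_pow, Finset.sum_const, Finset.card_univ, nsmul_eq_mul, mul_one]
    rw [ZMod.card_units_eq_totient, Nat.totient_prime hp]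
    push_cast [Nat.cast_sub hp.one_lt.le]
    ring
  have hdvd1 : (p : ℤ) ∣ (p : ℤ) - 1 := by
    have := Polynomial.eval_dvd (p := cyclotomic p ℤ) (q := A) hdvdZ (x := (1 : ℤ))
    rwa [eval_one_cyclotomic_prime, heval] at this
  have hle : (p : ℤ) ≤ (p : ℤ) - 1 := Int.le_of_dvd (by
    have : (2 : ℤ) ≤ p := by exact_mod_cast hp.two_le
    linarith) hdvd1
  linarith

/-- Twisted multiplicativity of Kloosterman sums. -/
lemma kloosterman_mul (a b : ℤ) (m n : ℕ) [NeZero m] [NeZero n] (h : Nat.Coprime m n)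
    (n' m' : ℤ) (hbez : (n : ℤ) * n' + (m : ℤ) * m' = 1) :
    kloosterman a b (m * n)
      = kloosterman (n' * a) (n' * b) m * kloosterman (m' * a) (m' * b) n := by
  haveI : NeZero (m * n) := ⟨mul_ne_zero (NeZero.ne m) (NeZero.ne n)⟩
  rw [kloosterman_eq, kloosterman_eq, kloosterman_eq,
    Finset.sum_mul_sum, ← Fintype.sum_prod_type']
  set E : (ZMod (m * n))ˣ ≃* (ZMod m)ˣ × (ZMod n)ˣ :=
    (Units.mapEquiv (ZMod.chineseRemainder h).toMulEquiv).trans MulEquiv.prodUnits with hE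
  have hfst : ∀ w : (ZMod (m * n))ˣ,
      (((E w).1 : (ZMod m)ˣ) : ZMod m) = ZMod.cast ((w : ZMod (m * n))) := fun w => by
    rw [hE]; simp [MulEquiv.prodUnits, Units.coe_mapEquiv, ZMod.chineseRemainder]
  have hsnd : ∀ w : (ZMod (m * n))ˣ,
      (((E w).2 : (ZMod n)ˣ) : ZMod n) = ZMod.cast ((w : ZMod (m * n))) := fun w => by
    rw [hE]; simp [MulEquiv.prodUnits, Units.coe_mapEquiv, ZMod.chineseRemainder]
  have hvalm : ∀ y : ZMod (m * n), ((ZMod.cast y : ZMod m)).val = y.val % m := by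
    intro y; rw [← ZMod.natCast_val, ZMod.val_natCast]
  have hvaln : ∀ y : ZMod (m * n), ((ZMod.cast y : ZMod n)).val = y.val % n := by
    intro y; rw [← ZMod.natCast_val, ZMod.val_natCast]
  refine Fintype.sum_equiv E.toEquiv _ _ (fun x => ?_)
  set y : ℤ := a * (((x : ZMod (m*n))).val : ℤ) + b * ((((x⁻¹ : (ZMod (m*n))ˣ) : ZMod (m*n))).val : ℤ) with hy
  have hsplit : y = (n : ℤ) * (n' * y) + (m : ℤ) * (m' * y) := by linear_combination (-y) * hbez
  have lhs_eq : eC (m * n) y = eC m (n' * y) * eC n (m' * y) := by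
    rw [hsplit, eC_add]
    congr 1
    · rw [← hsplit]; exact eC_cancel m n (NeZero.ne n) _
    · rw [← hsplit, show m * n = n * m from Nat.mul_comm m n]
      exact eC_cancel n m (NeZero.ne m) _
  rw [lhs_eq]
  congr 1
  · refine eC_congr (NeZero.ne m) ?_
    have h1 : ((((x : ZMod (m*n))).val : ℤ)) ≡ ((((E x).1 : ZMod m)).val : ℤ) [ZMOD m] := by
      rw [hfst, hvalm]
      push_cast
      exact (Int.emod_emod_of_dvd _ dvd_rfl).symm
    have h2 : ((((x⁻¹ : (ZMod (m*n))ˣ) : ZMod (m*n))).val : ℤ) ≡ (((((E x).1)⁻¹ : (ZMod m)ˣ) : ZMod m)).val [ZMOD m] := by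
      have : ((E x).1)⁻¹ = (E x⁻¹).1 := by rw [map_inv]; simp
      rw [this, hfst, hvalm]
      push_cast
      exact (Int.emod_emod_of_dvd _ dvd_rfl).symm
    calc n' * y ≡ n' * (a * (((E x).1 : ZMod m)).val + b * ((((E x).1)⁻¹ : (ZMod m)ˣ) : ZMod m).val) [ZMOD m] := by
          exact Int.ModEq.mul_left n' ((h1.mul_left a).add (h2.mul_left b))
      _ = n' * a * (((E x).1 : ZMod m)).val + n' * b * ((((E x).1)⁻¹ : (ZMod m)ˣ) : ZMod m).val := by ring
  · refine eC_congr (NeZero.ne n) ?_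
    have h1 : ((((x : ZMod (m*n))).val : ℤ)) ≡ ((((E x).2 : ZMod n)).val : ℤ) [ZMOD n] := by
      rw [hsnd, hvaln]
      push_cast
      exact (Int.emod_emod_of_dvd _ dvd_rfl).symm
    have h2 : ((((x⁻¹ : (ZMod (m*n))ˣ) : ZMod (m*n))).val : ℤ) ≡ (((((E x).2)⁻¹ : (ZMod n)ˣ) : ZMod n)).val [ZMOD n] := by
      have : ((E x).2)⁻¹ = (E x⁻¹).2 := by rw [map_inv]; simp
      rw [this, hsnd, hvaln]
      push_cast
      exact (Int.emod_emod_of_dvd _ dvd_rfl).symm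
    calc m' * y ≡ m' * (a * (((E x).2 : ZMod n)).val + b * ((((E x).2)⁻¹ : (ZMod n)ˣ) : ZMod n).val) [ZMOD n] := by
          exact Int.ModEq.mul_left m' ((h1.mul_left a).add (h2.mul_left b))
      _ = m' * a * (((E x).2 : ZMod n)).val + m' * b * ((((E x).2)⁻¹ : (ZMod n)ˣ) : ZMod n).val := by ring

lemma kloosterman_one (a b : ℤ) : kloosterman a b 1 = 1 := by
  rw [kloosterman_eq]
  have : ∀ x : (ZMod 1)ˣ, eC 1 (a * (((x : ZMod 1)).val : ℤ)
      + b * ((((x⁻¹ : (ZMod 1)ˣ) : ZMod 1)).val : ℤ)) = 1 := by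
    intro x
    have h1 : ((x : ZMod 1)).val = 0 := by have := ZMod.val_lt (x : ZMod 1); omega
    have h2 : (((x⁻¹ : (ZMod 1)ˣ) : ZMod 1)).val = 0 := by have := ZMod.val_lt ((x⁻¹ : (ZMod 1)ˣ) : ZMod 1); omega
    rw [h1, h2]
    simp [eC]
  rw [Finset.sum_congr rfl (fun x _ => this x)]
  simp

/-- For square-free `N`, the Kloosterman sum `K(a,b,N)` is nonzero for all integers `a, b`. -/
theorem kloosterman_ne_zero_of_squarefree (N : ℕ) (hN : Squarefree N) (a b : ℤ) :
    kloosterman a b N ≠ 0 := by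
  induction N using Nat.strong_induction_on generalizing a b with
  | _ N ih =>
    haveI : NeZero N := ⟨hN.ne_zero⟩
    rcases eq_or_ne N 1 with rfl | hN1
    · rw [kloosterman_one]; exact one_ne_zero
    · set p := N.minFac with hpdef
      have hp : p.Prime := Nat.minFac_prime hN1
      set M := N / p with hMdef
      have hNpM : N = p * M := (Nat.mul_div_cancel' N.minFac_dvd).symm
      have hsf : Nat.Coprime p M ∧ Squarefree p ∧ Squarefree M := by
        rw [← Nat.squarefree_mul_iff, ← hNpM]
        exact hN
      obtain ⟨hco, -, hsfM⟩ := hsf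
      haveI : NeZero p := ⟨hp.ne_zero⟩
      haveI : NeZero M := ⟨hsfM.ne_zero⟩
      have hMlt : M < N := Nat.div_lt_self (Nat.pos_of_ne_zero hN.ne_zero) hp.one_lt
      obtain ⟨u, v, huv⟩ : IsCoprime (p : ℤ) (M : ℤ) := by
        rw [Int.isCoprime_iff_gcd_eq_one]
        exact_mod_cast hco
      have hbez : (M : ℤ) * v + (p : ℤ) * u = 1 := by linarith [huv]
      rw [hNpM, kloosterman_mul a b p M hco v u hbez]
      exact mul_ne_zero (kloosterman_prime_ne_zero p hp _ _) (ih M hMlt hsfM _ _)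
end

section
/- Let m, N be positive integers with N square-free and gcd(m, N) = 1. Then there exists an integer n with 1 ≤ n ≤ 2N, n ≠ m, gcd(n, N) = 1, and |K(m, n, N)| ≥ √N / 2^{ω(N)/2 + 1}. -/
open scoped BigOperators

open Finset Complex

noncomputable def psi (N : ℕ) (t : ℤ) : ℂ := Complex.exp (2 * Real.pi * Complex.I * t / N)

lemma psi_add (N : ℕ) (a b : ℤ) : psi N (a + b) = psi N a * psi N b := by
  rw [psi, psi, psi, ← Complex.exp_add]; congr 1; push_cast; ring

lemma psi_zero (N : ℕ) : psi N 0 = 1 := by simp [psi]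

lemma psi_abs (N : ℕ) (t : ℤ) : ‖psi N t‖ = 1 := by
  have : (2 : ℂ) * Real.pi * Complex.I * t / N = ((2 * Real.pi * t / N : ℝ) : ℂ) * Complex.I := by
    push_cast; ring
  rw [psi, this, Complex.norm_exp_ofReal_mul_I]

lemma psi_conj (N : ℕ) (t : ℤ) : (starRingEnd ℂ) (psi N t) = psi N (-t) := by
  rw [psi, psi, ← Complex.exp_conj]
  congr 1
  simp only [map_div₀, map_mul, Complex.conj_I, Complex.conj_ofNat]
  push_cast
  simp [Complex.conj_ofReal]

lemma psi_natmul (N : ℕ) (k : ℕ) (t : ℤ) : psi N (k * t) = psi N t ^ k := by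
  rw [psi, psi, ← Complex.exp_nat_mul]; congr 1; push_cast; ring

lemma two_pi_I_ne_zero' : (2 : ℂ) * Real.pi * Complex.I ≠ 0 := by
  simp [Real.pi_ne_zero, Complex.I_ne_zero, Complex.ofReal_ne_zero]

lemma psi_eq_one_iff (N : ℕ) (hN : N ≠ 0) (t : ℤ) : psi N t = 1 ↔ (N : ℤ) ∣ t := by
  have hN' : (N : ℂ) ≠ 0 := Nat.cast_ne_zero.mpr hN
  rw [psi, Complex.exp_eq_one_iff]
  constructor
  · rintro ⟨k, hk⟩
    refine ⟨k, ?_⟩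
    have h1 : (2 : ℂ) * Real.pi * Complex.I * t / N = (2 * Real.pi * Complex.I) * (t / N) := by
      ring
    rw [h1, mul_comm (k : ℂ)] at hk
    have h2 := mul_left_cancel₀ two_pi_I_ne_zero' hk
    have : (t : ℂ) = N * k := by field_simp at h2; linear_combination h2
    exact_mod_cast this
  · rintro ⟨k, rfl⟩
    refine ⟨k, ?_⟩
    field_simp
    push_cast
    ring

lemma psi_intmul_self (N : ℕ) (hN : N ≠ 0) (k : ℤ) : psi N ((N : ℤ) * k) = 1 :=
  (psi_eq_one_iff N hN _).mpr ⟨k, rfl⟩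

lemma psi_congr (N : ℕ) (hN : N ≠ 0) {a b : ℤ} (h : (N : ℤ) ∣ a - b) : psi N a = psi N b := by
  obtain ⟨k, hk⟩ := h
  have : a = b + (N : ℤ) * k := by linarith
  rw [this, psi_add, psi_intmul_self N hN, mul_one]

lemma psi_geom (Q : ℕ) (hQ : Q ≠ 0) (t : ℤ) :
    ∑ k ∈ Finset.range Q, psi Q (k * t) = if (Q : ℤ) ∣ t then (Q : ℂ) else 0 := by
  simp_rw [psi_natmul]
  split_ifs with h
  · rw [(psi_eq_one_iff Q hQ t).mpr h]
    simp
  · have h1 : psi Q t ≠ 1 := fun hc => h ((psi_eq_one_iff Q hQ t).mp hc)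
    rw [geom_sum_eq h1]
    have : psi Q t ^ Q = 1 := by
      rw [← psi_natmul, (psi_eq_one_iff Q hQ _).mpr ⟨t, by ring⟩]
    rw [this, sub_self, zero_div]

lemma psi_cancel (p M : ℕ) (hp : p ≠ 0) (a : ℤ) : psi (p * M) ((p : ℤ) * a) = psi M a := by
  rw [psi, psi]
  congr 1
  have hp' : (p : ℂ) ≠ 0 := Nat.cast_ne_zero.mpr hp
  push_cast
  by_cases hM : (M : ℂ) = 0
  · rw [hM, mul_zero, div_zero, div_zero]
  · field_simp

noncomputable def Kfun (N : ℕ) [NeZero N] (a b : ℤ) : ℂ :=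
  ∑ u : (ZMod N)ˣ,
    psi N (a * (((u : ZMod N)).val : ℤ) + b * ((((u⁻¹ : (ZMod N)ˣ) : ZMod N)).val : ℤ))

lemma kloosterman_eq_Kfun (N : ℕ) [NeZero N] (a b : ℤ) :
    kloosterman a b N = Kfun N a b := by
  rw [kloosterman, Kfun]
  refine Finset.sum_nbij' (fun x => if h : Nat.gcd x N = 1 then ZMod.unitOfCoprime x h else 1)
    (fun u => (u : ZMod N).val) ?_ ?_ ?_ ?_ ?_
  · intro x hx; exact Finset.mem_univ _
  · intro u _
    simp only [Finset.mem_filter, Finset.mem_range]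
    exact ⟨ZMod.val_lt _, ZMod.val_coe_unit_coprime u⟩
  · intro x hx
    simp only [Finset.mem_filter, Finset.mem_range] at hx
    simp only [dif_pos hx.2]
    simp [ZMod.coe_unitOfCoprime, ZMod.val_natCast_of_lt hx.1]
  · intro u _
    have h1 : Nat.gcd (u : ZMod N).val N = 1 := ZMod.val_coe_unit_coprime u
    simp only [dif_pos h1]
    apply Units.ext
    push_cast [ZMod.coe_unitOfCoprime]
    rw [ZMod.natCast_val, ZMod.cast_id]
  · intro x hx
    simp only [Finset.mem_filter, Finset.mem_range] at hx
    simp only [dif_pos hx.2]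
    have hcoe : ((ZMod.unitOfCoprime x hx.2 : (ZMod N)ˣ) : ZMod N) = (x : ZMod N) :=
      ZMod.coe_unitOfCoprime x hx.2
    have hval : ((ZMod.unitOfCoprime x hx.2 : (ZMod N)ˣ) : ZMod N).val = x := by
      rw [hcoe, ZMod.val_natCast_of_lt hx.1]
    have hinv : (((ZMod.unitOfCoprime x hx.2)⁻¹ : (ZMod N)ˣ) : ZMod N) = (x : ZMod N)⁻¹ := by
      rw [← ZMod.inv_coe_unit, hcoe]
    rw [psi, hval, hinv]
    rw [mul_div_assoc]

lemma dvd_val_sub_iff (N : ℕ) [NeZero N] (a b : ZMod N) :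
    (N : ℤ) ∣ ((a.val : ℤ) - (b.val : ℤ)) ↔ a = b := by
  rw [← ZMod.intCast_zmod_eq_zero_iff_dvd]
  push_cast
  rw [sub_eq_zero]
  constructor
  · intro h
    have ha : ((a.val : ℕ) : ZMod N) = a := ZMod.natCast_rightInverse a
    have hb : ((b.val : ℕ) : ZMod N) = b := ZMod.natCast_rightInverse b
    rwa [ha, hb] at h
  · intro h; rw [h]

lemma Kfun_mul_conj (N : ℕ) [NeZero N] (a b : ℤ) :
    Kfun N a b * (starRingEnd ℂ) (Kfun N a b) =
      ∑ u : (ZMod N)ˣ, ∑ v : (ZMod N)ˣ,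
        psi N ((a * (((u : ZMod N)).val : ℤ) + b * ((((u⁻¹ : (ZMod N)ˣ) : ZMod N)).val : ℤ))
          - (a * (((v : ZMod N)).val : ℤ) + b * ((((v⁻¹ : (ZMod N)ˣ) : ZMod N)).val : ℤ))) := by
  rw [Kfun, map_sum, Finset.sum_mul_sum]
  refine Finset.sum_congr rfl fun u _ => Finset.sum_congr rfl fun v _ => ?_
  rw [psi_conj, ← psi_add, sub_eq_add_neg]

lemma parseval (N : ℕ) [NeZero N] (a : ℤ) :
    ∑ n ∈ Finset.range N, Kfun N a n * (starRingEnd ℂ) (Kfun N a n)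
      = (N : ℂ) * (N.totient : ℂ) := by
  have hN0 : N ≠ 0 := NeZero.ne N
  simp_rw [Kfun_mul_conj]
  rw [Finset.sum_comm]
  have step1 : ∀ u : (ZMod N)ˣ,
      (∑ n ∈ Finset.range N, ∑ v : (ZMod N)ˣ,
        psi N ((a * (((u : ZMod N)).val : ℤ) + (n : ℤ) * ((((u⁻¹ : (ZMod N)ˣ) : ZMod N)).val : ℤ))
          - (a * (((v : ZMod N)).val : ℤ) + (n : ℤ) * ((((v⁻¹ : (ZMod N)ˣ) : ZMod N)).val : ℤ))))
      = (N : ℂ) := by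
    intro u
    rw [Finset.sum_comm]
    have inner : ∀ v : (ZMod N)ˣ,
        (∑ n ∈ Finset.range N,
          psi N ((a * (((u : ZMod N)).val : ℤ) + (n : ℤ) * ((((u⁻¹ : (ZMod N)ˣ) : ZMod N)).val : ℤ))
            - (a * (((v : ZMod N)).val : ℤ) + (n : ℤ) * ((((v⁻¹ : (ZMod N)ˣ) : ZMod N)).val : ℤ))))
        = psi N (a * (((u : ZMod N)).val : ℤ) - a * (((v : ZMod N)).val : ℤ)) *
            (if ((N : ℤ) ∣ ((((u⁻¹ : (ZMod N)ˣ) : ZMod N)).val : ℤ) - ((((v⁻¹ : (ZMod N)ˣ) : ZMod N)).val : ℤ)) then (N : ℂ) else 0) := by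
      intro v
      rw [← psi_geom N hN0, Finset.mul_sum]
      refine Finset.sum_congr rfl fun n _ => ?_
      rw [← psi_add]
      congr 1
      ring
    simp_rw [inner]
    rw [Finset.sum_eq_single u]
    · rw [if_pos (by simp), sub_self, psi_zero, one_mul]
    · intro v _ hvu
      rw [if_neg, mul_zero]
      rw [dvd_val_sub_iff]
      intro hc
      exact hvu (by
        have : (u⁻¹ : (ZMod N)ˣ) = v⁻¹ := Units.ext hc
        exact (inv_inj.mp this).symm)
    · intro h; exact absurd (Finset.mem_univ u) h
  calc ∑ u : (ZMod N)ˣ, _ = ∑ _u : (ZMod N)ˣ, (N : ℂ) := Finset.sum_congr rfl fun u _ => step1 u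
    _ = (Fintype.card (ZMod N)ˣ : ℂ) * N := by rw [Finset.sum_const]; simp [mul_comm]
    _ = (N : ℂ) * (N.totient : ℂ) := by rw [ZMod.card_units_eq_totient, mul_comm]

lemma fiber_sum (p M : ℕ) (hp : p.Prime) (hM : M ≠ 0) (hpM : ¬ p ∣ M)
    (a : ℤ) (hpa : ¬ (p : ℤ) ∣ a) (b : (ZMod M)ˣ) :
    haveI : NeZero (p * M) := ⟨Nat.mul_ne_zero hp.pos.ne' hM⟩
    ∃ t : ℤ, (∑ u ∈ Finset.univ.filter
        (fun u : (ZMod (p * M))ˣ =>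
          Units.map (ZMod.castHom (dvd_mul_left M p) (ZMod M)).toMonoidHom u = b),
        psi (p * M) (a * (((u : ZMod (p * M))).val : ℤ))) = - psi (p * M) (a * t) := by
  haveI : NeZero (p * M) := ⟨Nat.mul_ne_zero hp.pos.ne' hM⟩
  haveI : NeZero M := ⟨hM⟩
  haveI : Fact p.Prime := ⟨hp⟩
  set N := p * M with hN
  have hN0 : N ≠ 0 := Nat.mul_ne_zero hp.pos.ne' hM
  set z : ℕ := ((b : ZMod M)).val with hz
  have hzM : z < M := ZMod.val_lt _
  have hzcop : Nat.Coprime z M := ZMod.val_coe_unit_coprime b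
  have hbz : ((z : ℕ) : ZMod M) = (b : ZMod M) := ZMod.natCast_rightInverse _
  -- coprimality characterization
  have hcop_iff : ∀ j : ℕ, Nat.Coprime (z + M * j) N ↔ ¬ p ∣ (z + M * j) := by
    intro j
    rw [hN, Nat.coprime_mul_iff_right]
    have h2 : Nat.Coprime (z + M * j) M := by
      rw [Nat.coprime_add_mul_left_left]
      exact hzcop
    constructor
    · rintro ⟨h1, -⟩
      exact hp.coprime_iff_not_dvd.mp (Nat.coprime_comm.mp h1)
    · intro h
      exact ⟨Nat.coprime_comm.mp (hp.coprime_iff_not_dvd.mpr h), h2⟩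
  -- reindex the fiber sum over j ∈ range p with coprime condition
  have hreindex : (∑ u ∈ Finset.univ.filter
        (fun u : (ZMod N)ˣ =>
          Units.map (ZMod.castHom (dvd_mul_left M p) (ZMod M)).toMonoidHom u = b),
        psi N (a * (((u : ZMod N)).val : ℤ)))
      = ∑ j ∈ (Finset.range p).filter (fun j => Nat.Coprime (z + M * j) N),
          psi N (a * ((z + M * j : ℕ) : ℤ)) := by
    refine Finset.sum_nbij'
      (fun j => if h : Nat.Coprime (z + M * j) N then ZMod.unitOfCoprime _ h else 1)
      (fun u => ((u : ZMod N)).val / M)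
      ?_ ?_ ?_ ?_ ?_ |>.symm
    · -- maps to fiber
      intro j hj
      simp only [Finset.mem_filter, Finset.mem_range] at hj
      simp only [dif_pos hj.2, Finset.mem_filter, Finset.mem_univ, true_and]
      apply Units.ext
      have hlt : z + M * j < N := by
        calc z + M * j < M + M * j := by omega
        _ = M * (j + 1) := by ring
        _ ≤ M * p := Nat.mul_le_mul_left _ hj.1
        _ = N := by rw [hN, mul_comm]
      show (ZMod.castHom (dvd_mul_left M p) (ZMod M))
          ((ZMod.unitOfCoprime _ hj.2 : (ZMod N)ˣ) : ZMod N) = (b : ZMod M)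
      rw [ZMod.coe_unitOfCoprime, map_natCast, ← hbz]
      push_cast
      simp
    · intro u hu
      simp only [Finset.mem_filter, Finset.mem_univ, true_and] at hu
      have hval : ((u : ZMod N)).val % M = z := by
        have h1 : (((((u : ZMod N)).val : ℕ)) : ZMod M) = ((z : ℕ) : ZMod M) := by
          rw [hbz]
          have := congrArg (fun w : (ZMod M)ˣ => (w : ZMod M)) hu
          simpa [ZMod.natCast_val] using this
        have hmod := (ZMod.natCast_eq_natCast_iff _ _ _).mp h1
        rwa [Nat.ModEq, Nat.mod_eq_of_lt hzM] at hmod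
      have hval_eq : z + M * (((u : ZMod N)).val / M) = ((u : ZMod N)).val := by
        conv_rhs => rw [← Nat.mod_add_div (((u : ZMod N)).val) M]
        rw [hval]
      simp only [Finset.mem_filter, Finset.mem_range]
      constructor
      · have hlt : ((u : ZMod N)).val < p * M := by rw [← hN]; exact ZMod.val_lt _
        exact Nat.div_lt_of_lt_mul (by rw [mul_comm]; exact hlt)
      · rw [hval_eq]; exact ZMod.val_coe_unit_coprime u
    · -- left inverse : j (i j) = j
      intro j hj
      simp only [Finset.mem_filter, Finset.mem_range] at hj
      simp only [dif_pos hj.2]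
      have hlt : z + M * j < N := by
        calc z + M * j < M + M * j := by omega
        _ = M * (j + 1) := by ring
        _ ≤ M * p := Nat.mul_le_mul_left _ hj.1
        _ = N := by rw [hN, mul_comm]
      have hv : ((ZMod.unitOfCoprime _ hj.2 : (ZMod N)ˣ) : ZMod N).val = z + M * j := by
        rw [ZMod.coe_unitOfCoprime, ZMod.val_natCast_of_lt hlt]
      rw [hv, Nat.add_mul_div_left _ _ (Nat.pos_of_ne_zero hM), Nat.div_eq_of_lt hzM, zero_add]
    · -- right inverse : i (j u) = u
      intro u hu
      simp only [Finset.mem_filter, Finset.mem_univ, true_and] at hu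
      have hval : ((u : ZMod N)).val % M = z := by
        have h1 : (((((u : ZMod N)).val : ℕ)) : ZMod M) = ((z : ℕ) : ZMod M) := by
          rw [hbz]
          have := congrArg (fun w : (ZMod M)ˣ => (w : ZMod M)) hu
          simpa [ZMod.natCast_val] using this
        have hmod := (ZMod.natCast_eq_natCast_iff _ _ _).mp h1
        rwa [Nat.ModEq, Nat.mod_eq_of_lt hzM] at hmod
      have hval_eq : z + M * (((u : ZMod N)).val / M) = ((u : ZMod N)).val := by
        conv_rhs => rw [← Nat.mod_add_div (((u : ZMod N)).val) M]
        rw [hval]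
      have hcop : Nat.Coprime (z + M * (((u : ZMod N)).val / M)) N := by
        rw [hval_eq]; exact ZMod.val_coe_unit_coprime u
      simp only [dif_pos hcop]
      apply Units.ext
      rw [ZMod.coe_unitOfCoprime, hval_eq]
      exact ZMod.natCast_rightInverse _
    · -- terms
      intro j hj
      simp only [Finset.mem_filter, Finset.mem_range] at hj
      simp only [dif_pos hj.2]
      have hlt : z + M * j < N := by
        calc z + M * j < M + M * j := by omega
        _ = M * (j + 1) := by ring
        _ ≤ M * p := Nat.mul_le_mul_left _ hj.1
        _ = N := by rw [hN, mul_comm]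
      rw [ZMod.coe_unitOfCoprime, ZMod.val_natCast_of_lt hlt]
  have htotal : ∑ j ∈ Finset.range p, psi N (a * ((z + M * j : ℕ) : ℤ)) = 0 := by
    have hterm : ∀ j : ℕ, psi N (a * ((z + M * j : ℕ) : ℤ))
        = psi N (a * z) * (psi N (a * M)) ^ j := by
      intro j
      rw [← psi_natmul, ← psi_add]
      congr 1
      push_cast
      ring
    simp_rw [hterm]
    rw [← Finset.mul_sum]
    have hr1 : psi N (a * M) ≠ 1 := by
      rw [Ne, psi_eq_one_iff N hN0]
      intro hdvd
      have hM' : (M : ℤ) ≠ 0 := Int.natCast_ne_zero.mpr hM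
      have : (p : ℤ) ∣ a := by
        refine (mul_dvd_mul_iff_right hM').mp ?_
        have : ((p * M : ℕ) : ℤ) ∣ a * M := hdvd
        push_cast at this
        exact this
      exact hpa this
    rw [geom_sum_eq hr1]
    have hrp : psi N (a * M) ^ p = 1 := by
      rw [← psi_natmul, psi_eq_one_iff N hN0]
      exact ⟨a, by push_cast [hN]; ring⟩
    rw [hrp, sub_self, zero_div, mul_zero]
  set c : ZMod p := (z : ZMod p) with hc
  set d : ZMod p := (M : ZMod p) with hd
  have hd0 : d ≠ 0 := by
    rw [hd, Ne, ZMod.natCast_eq_zero_iff]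
    exact hpM
  set j₀ : ℕ := ((-c) * d⁻¹).val with hj₀
  have hj₀cast : ((j₀ : ℕ) : ZMod p) = (-c) * d⁻¹ := ZMod.natCast_rightInverse _
  have hnc : (Finset.range p).filter (fun j => ¬ Nat.Coprime (z + M * j) N) = {j₀} := by
    ext j
    simp only [Finset.mem_filter, Finset.mem_range, Finset.mem_singleton]
    constructor
    · rintro ⟨hjp, hncj⟩
      rw [hcop_iff j, not_not] at hncj
      have hcast : ((z + M * j : ℕ) : ZMod p) = 0 :=
        (ZMod.natCast_eq_zero_iff _ _).mpr hncj
      push_cast at hcast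
      have h3 : d * (j : ZMod p) = -c := by linear_combination hcast
      have h2 : (j : ZMod p) = (-c) * d⁻¹ := by
        rw [← h3, mul_comm d, mul_assoc, mul_inv_cancel₀ hd0, mul_one]
      have := congrArg ZMod.val h2
      rwa [ZMod.val_natCast_of_lt hjp, ← hj₀] at this
    · rintro rfl
      refine ⟨ZMod.val_lt _, ?_⟩
      rw [hcop_iff, not_not, ← ZMod.natCast_eq_zero_iff]
      push_cast
      rw [hj₀cast]
      field_simp
      rw [← hc, ← hd]
      ring
  refine ⟨((z + M * j₀ : ℕ) : ℤ), ?_⟩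
  rw [hreindex]
  have hsplit := Finset.sum_filter_add_sum_filter_not (Finset.range p)
    (fun j => Nat.Coprime (z + M * j) N) (fun j => psi N (a * ((z + M * j : ℕ) : ℤ)))
  rw [htotal, hnc, Finset.sum_singleton] at hsplit
  linear_combination hsplit

lemma parseval_p (N p M : ℕ) (hNeq : N = p * M) (hp : p.Prime) (hM : M ≠ 0) (hpM : ¬ p ∣ M)
    (a : ℤ) (hpa : ¬ (p : ℤ) ∣ a) :
    haveI : NeZero N := ⟨hNeq ▸ Nat.mul_ne_zero hp.pos.ne' hM⟩
    ∑ k ∈ Finset.range M, Kfun N a ((p : ℤ) * k) *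
      (starRingEnd ℂ) (Kfun N a ((p : ℤ) * k)) = (M : ℂ) * (M.totient : ℂ) := by
  subst hNeq
  haveI : NeZero (p * M) := ⟨Nat.mul_ne_zero hp.pos.ne' hM⟩
  haveI : NeZero M := ⟨hM⟩
  set N := p * M with hN
  have hN0 : N ≠ 0 := Nat.mul_ne_zero hp.pos.ne' hM
  set φ : (ZMod N)ˣ →* (ZMod M)ˣ :=
    Units.map (ZMod.castHom (dvd_mul_left M p) (ZMod M)).toMonoidHom with hφ
  set A : (ZMod N)ˣ → ℤ := fun u => (((u : ZMod N)).val : ℤ) with hA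
  set B : (ZMod N)ˣ → ℤ := fun u => ((((u⁻¹ : (ZMod N)ˣ) : ZMod N)).val : ℤ) with hB
  set F : (ZMod N)ˣ → ℂ := fun u => psi N (a * A u) with hF
  -- condition translation
  have cond_iff : ∀ u v : (ZMod N)ˣ, ((M : ℤ) ∣ B u - B v) ↔ φ u = φ v := by
    intro u v
    rw [← ZMod.intCast_zmod_eq_zero_iff_dvd, Int.cast_sub, sub_eq_zero]
    have hcast : ∀ w : (ZMod N)ˣ, ((B w : ℤ) : ZMod M)
        = ((φ w)⁻¹ : (ZMod M)ˣ) := by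
      intro w
      rw [hB, Int.cast_natCast, ZMod.natCast_val, hφ]
      simp only [← map_inv, Units.coe_map, RingHom.toMonoidHom_eq_coe, MonoidHom.coe_coe,
        ZMod.castHom_apply]
    rw [hcast u, hcast v]
    constructor
    · intro h
      have := Units.ext h
      exact inv_inj.mp this
    · intro h; rw [h]
  simp_rw [Kfun_mul_conj]
  rw [Finset.sum_comm]
  have step1 : ∀ u : (ZMod N)ˣ,
      (∑ k ∈ Finset.range M, ∑ v : (ZMod N)ˣ,
        psi N ((a * A u + ((p : ℤ) * k) * B u) - (a * A v + ((p : ℤ) * k) * B v)))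
      = (M : ℂ) * ∑ v ∈ Finset.univ.filter (fun v => φ v = φ u), F u * (starRingEnd ℂ) (F v) := by
    intro u
    rw [Finset.sum_comm]
    have inner : ∀ v : (ZMod N)ˣ,
        (∑ k ∈ Finset.range M,
          psi N ((a * A u + ((p : ℤ) * k) * B u) - (a * A v + ((p : ℤ) * k) * B v)))
        = (F u * (starRingEnd ℂ) (F v)) * (if (M : ℤ) ∣ B u - B v then (M : ℂ) else 0) := by
      intro v
      have hsplit : ∀ k : ℕ, (a * A u + ((p : ℤ) * k) * B u) - (a * A v + ((p : ℤ) * k) * B v)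
          = (a * A u + (-(a * A v))) + (p : ℤ) * ((k : ℤ) * (B u - B v)) := by
        intro k; ring
      have hterm : ∀ k : ℕ,
          psi N ((a * A u + ((p : ℤ) * k) * B u) - (a * A v + ((p : ℤ) * k) * B v))
          = (F u * (starRingEnd ℂ) (F v)) * psi M ((k : ℤ) * (B u - B v)) := by
        intro k
        rw [hsplit k, psi_add, psi_add, ← psi_cancel p M hp.pos.ne' ((k : ℤ) * (B u - B v)),
          hF, psi_conj]
      simp_rw [hterm]
      rw [← Finset.mul_sum, psi_geom M hM]
    simp_rw [inner, cond_iff]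
    rw [Finset.mul_sum, Finset.sum_filter]
    refine Finset.sum_congr rfl fun v _ => ?_
    by_cases h : φ v = φ u
    · rw [if_pos h, if_pos h.symm]
      ring
    · rw [if_neg h, if_neg (fun hc => h hc.symm), mul_zero]
  refine (Finset.sum_congr rfl fun u _ => step1 u).trans ?_
  rw [← Finset.mul_sum]
  set S : (ZMod M)ˣ → ℂ := fun b => ∑ u ∈ Finset.univ.filter (fun u => φ u = b), F u with hS
  have hSconj : ∀ u : (ZMod N)ˣ,
      (∑ v ∈ Finset.univ.filter (fun v => φ v = φ u), F u * (starRingEnd ℂ) (F v))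
        = F u * (starRingEnd ℂ) (S (φ u)) := by
    intro u
    rw [hS, map_sum, Finset.mul_sum]
  simp_rw [hSconj]
  have hfib : (∑ u : (ZMod N)ˣ, F u * (starRingEnd ℂ) (S (φ u)))
      = ∑ b : (ZMod M)ˣ, S b * (starRingEnd ℂ) (S b) := by
    rw [← Finset.sum_fiberwise Finset.univ φ (fun u => F u * (starRingEnd ℂ) (S (φ u)))]
    refine Finset.sum_congr rfl fun b _ => ?_
    rw [hS, Finset.sum_mul]
    refine Finset.sum_congr rfl fun u hu => ?_
    simp only [Finset.mem_filter] at hu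
    rw [hu.2]
  rw [hfib]
  have hone : ∀ b : (ZMod M)ˣ, S b * (starRingEnd ℂ) (S b) = 1 := by
    intro b
    obtain ⟨t, ht⟩ := fiber_sum p M hp hM hpM a hpa b
    have hSb : S b = - psi N (a * t) := ht
    rw [hSb, map_neg, neg_mul_neg, psi_conj, ← psi_add]
    have : a * t + -(a * t) = 0 := by ring
    rw [this, psi_zero]
  simp_rw [hone]
  rw [Finset.sum_const, Finset.card_univ, ZMod.card_units_eq_totient]
  simp

lemma sum_biUnion_le_sum {ι α : Type*} [DecidableEq α] (s : Finset ι) (t : ι → Finset α)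
    (f : α → ℝ) (hf : ∀ x, 0 ≤ f x) :
    ∑ x ∈ s.biUnion t, f x ≤ ∑ i ∈ s, ∑ x ∈ t i, f x := by
  classical
  induction s using Finset.induction_on with
  | empty => simp
  | insert a s' h ih =>
    rw [Finset.biUnion_insert, Finset.sum_insert h]
    have hu : ∑ x ∈ t a ∪ s'.biUnion t, f x ≤ ∑ x ∈ t a, f x + ∑ x ∈ s'.biUnion t, f x := by
      have := Finset.sum_union_inter (s₁ := t a) (s₂ := s'.biUnion t) (f := f)
      have hnn : 0 ≤ ∑ x ∈ t a ∩ s'.biUnion t, f x := Finset.sum_nonneg fun x _ => hf x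
      linarith
    exact hu.trans (by linarith)

lemma sum_recip (P : Finset ℕ) (hP : ∀ q ∈ P, 2 ≤ q) :
    ∑ q ∈ P, (1 : ℝ) / (q * (q - 1)) ≤ 1 - 1 / (P.card + 1) := by
  classical
  induction P using Finset.induction_on_max with
  | empty => simp
  | insert a s hmax ih =>
    have ha : a ∉ s := fun hc => lt_irrefl a (hmax a hc)
    have hs2 : ∀ q ∈ s, 2 ≤ q := fun q hq => hP q (Finset.mem_insert_of_mem hq)
    have ha2 : 2 ≤ a := hP a (Finset.mem_insert_self a s)
    have hsub : s ⊆ Finset.Ico 2 a := fun x hx =>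
      Finset.mem_Ico.mpr ⟨hs2 x hx, hmax x hx⟩
    have hcard : s.card + 2 ≤ a := by
      have := Finset.card_le_card hsub
      rw [Nat.card_Ico] at this
      omega
    rw [Finset.sum_insert ha, Finset.card_insert_of_notMem ha]
    set r := s.card with hr
    have hihs := ih hs2
    have haR : (r : ℝ) + 2 ≤ (a : ℝ) := by exact_mod_cast hcard
    have hrR : (0 : ℝ) ≤ r := Nat.cast_nonneg r
    have hkey : (1 : ℝ) / (a * (a - 1)) ≤ 1 / ((r + 1) : ℝ) - 1 / ((r + 2) : ℝ) := by
      have h1 : (1 : ℝ) / ((r + 1) : ℝ) - 1 / ((r + 2) : ℝ) = 1 / ((r + 2) * (r + 1)) := by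
        field_simp
        ring
      rw [h1]
      apply one_div_le_one_div_of_le
      · positivity
      · nlinarith
    have hcast : ((r + 1 : ℕ) : ℝ) = (r : ℝ) + 1 := by push_cast; ring
    rw [hcast]
    have heq2 : (1 : ℝ) - 1 / ((r : ℝ) + 1 + 1) = 1 - 1 / ((r : ℝ) + 2) := by
      congr 1
      rw [show ((r : ℝ) + 1 + 1) = (r : ℝ) + 2 by ring]
    rw [heq2]
    linarith

lemma Kfun_add_N (N : ℕ) [NeZero N] (a b : ℤ) : Kfun N a (b + N) = Kfun N a b := by
  rw [Kfun, Kfun]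
  refine Finset.sum_congr rfl fun u _ => ?_
  refine psi_congr N (NeZero.ne N) ?_
  refine ⟨(((u⁻¹ : (ZMod N)ˣ) : ZMod N)).val, by ring⟩


/-- For square-free `N` and `gcd(m,N) = 1`, there exists `1 ≤ n ≤ 2N` with `n ≠ m`,
`gcd(n,N) = 1` and `|K(m,n,N)| ≥ √N / 2^{ω(N)/2 + 1}`. -/
theorem exists_large_kloosterman (m N : ℕ) (hm : 0 < m) (hN : 0 < N) (hsf : Squarefree N)
    (hmN : Nat.gcd m N = 1) :
    ∃ n : ℕ, 1 ≤ n ∧ n ≤ 2 * N ∧ n ≠ m ∧ Nat.gcd n N = 1 ∧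
      Real.sqrt N / 2 ^ ((N.primeFactors.card : ℝ) / 2 + 1) ≤
        ‖kloosterman (m : ℤ) (n : ℤ) N‖ := by
  classical
  haveI : NeZero N := ⟨hN.ne'⟩
  by_cases hN1 : N = 1
  · subst hN1
    refine ⟨if m = 1 then 2 else 1, ?_, ?_, ?_, ?_, ?_⟩
    · split <;> norm_num
    · split <;> norm_num
    · split
      · rename_i h; rw [h]; norm_num
      · rename_i h; intro hc; exact h hc.symm
    · split <;> norm_num
    · have hK : kloosterman (m : ℤ) ((if m = 1 then 2 else 1 : ℕ) : ℤ) 1 = 1 := by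
        rw [kloosterman_eq_Kfun, Kfun]
        have : ∀ u : (ZMod 1)ˣ, psi 1 ((m : ℤ) * (((u : ZMod 1)).val : ℤ) +
            ((if m = 1 then 2 else 1 : ℕ) : ℤ) * ((((u⁻¹ : (ZMod 1)ˣ) : ZMod 1)).val : ℤ)) = 1 := by
          intro u
          exact (psi_eq_one_iff 1 one_ne_zero _).mpr (one_dvd _)
        rw [Finset.sum_congr rfl (fun u _ => this u)]
        rw [Finset.sum_const, Finset.card_univ, ZMod.card_units_eq_totient, Nat.totient_one]
        simp
      rw [hK]
      simp only [Nat.primeFactors_one, Finset.card_empty, Nat.cast_zero, map_one]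
      rw [show ((0:ℝ)/2 + 1) = (1:ℝ) by ring, Real.rpow_one]
      rw [Nat.cast_one, Real.sqrt_one]
      norm_num
  · -- main case N ≥ 2
    have hN2 : 2 ≤ N := by omega
    set ω := N.primeFactors.card with hω
    set f : ℕ → ℝ := fun n => Complex.normSq (Kfun N (m : ℤ) (n : ℤ)) with hf
    have hf0 : ∀ n, 0 ≤ f n := fun n => Complex.normSq_nonneg _
    have hPar : ∑ n ∈ Finset.range N, f n = (N : ℝ) * N.totient := by
      have h := parseval N (m : ℤ)
      simp_rw [Complex.mul_conj] at h
      exact_mod_cast h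
    -- per-prime bound
    have hq_eq : ∀ q ∈ N.primeFactors,
        ∑ n ∈ (Finset.range N).filter (fun n => q ∣ n), f n
          = (N : ℝ) * N.totient * (1 / ((q : ℝ) * ((q : ℝ) - 1))) := by
      intro q hq
      obtain ⟨hqp, hqd, -⟩ := Nat.mem_primeFactors.mp hq
      have hqd2 := hqd
      obtain ⟨M, hNpM⟩ : ∃ M, N = q * M := hqd2
      have hM0 : M ≠ 0 := by rintro rfl; rw [mul_zero] at hNpM; omega
      have hqM : ¬ q ∣ M := by
        intro hc
        obtain ⟨c, hc'⟩ := hc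
        have : q * q ∣ N := ⟨c, by rw [hNpM, hc']; ring⟩
        exact hqp.not_isUnit (hsf q this)
      have hqm : ¬ (q : ℤ) ∣ (m : ℤ) := by
        rw [Int.natCast_dvd_natCast]
        intro hc
        have : q ∣ 1 := hmN ▸ Nat.dvd_gcd hc hqd
        exact hqp.one_lt.ne' (Nat.dvd_one.mp this)
      -- the moment computation
      have hTp : ∑ k ∈ Finset.range M, f (q * k) = (M : ℝ) * M.totient := by
        have h := parseval_p N q M hNpM hqp hM0 hqM (m : ℤ) hqm
        simp_rw [Complex.mul_conj] at h
        have hcast : ∀ k ∈ Finset.range M, f (q * k)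
            = Complex.normSq (Kfun N (m : ℤ) ((q : ℤ) * (k : ℤ))) := by
          intro k _
          have hck : ((q * k : ℕ) : ℤ) = (q : ℤ) * (k : ℤ) := by push_cast; ring
          simp only [hf]
          rw [hck]
        rw [Finset.sum_congr rfl hcast]
        exact_mod_cast h
      -- reindex
      have hre : ∑ n ∈ (Finset.range N).filter (fun n => q ∣ n), f n
          = ∑ k ∈ Finset.range M, f (q * k) := by
        refine Finset.sum_nbij' (fun n => n / q) (fun k => q * k) ?_ ?_ ?_ ?_ ?_
        · intro n hn
          simp only [Finset.mem_filter, Finset.mem_range] at hn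
          simp only [Finset.mem_range]
          have hlt : n < q * M := hNpM ▸ hn.1
          exact Nat.div_lt_of_lt_mul hlt
        · intro k hk
          simp only [Finset.mem_range] at hk
          simp only [Finset.mem_filter, Finset.mem_range]
          exact ⟨by rw [hNpM]; exact mul_lt_mul_of_pos_left hk hqp.pos, Dvd.intro k rfl⟩
        · intro n hn
          simp only [Finset.mem_filter, Finset.mem_range] at hn
          exact Nat.mul_div_cancel' hn.2
        · intro k _
          exact Nat.mul_div_cancel_left k hqp.pos
        · intro n hn
          simp only [Finset.mem_filter, Finset.mem_range] at hn
          rw [Nat.mul_div_cancel' hn.2]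
      -- arithmetic
      have hq2 : 2 ≤ q := hqp.two_le
      have hφ : (N.totient : ℝ) = ((q : ℝ) - 1) * (M.totient : ℝ) := by
        have hcop : Nat.Coprime q M := hqp.coprime_iff_not_dvd.mpr hqM
        rw [hNpM, Nat.totient_mul hcop, Nat.totient_prime hqp]
        push_cast [Nat.cast_sub hqp.one_lt.le]
        ring
      have hNR : (N : ℝ) = (q : ℝ) * (M : ℝ) := by exact_mod_cast congrArg (Nat.cast : ℕ → ℝ) hNpM
      rw [hre, hTp, hφ, hNR]
      have hq0 : (q : ℝ) ≠ 0 := by positivity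
      have hq10 : (q : ℝ) - 1 ≠ 0 := by
        have : (2 : ℝ) ≤ (q : ℝ) := by exact_mod_cast hq2
        linarith
      field_simp
    -- bad set bound
    have hbad : ∑ n ∈ (Finset.range N).filter (fun n => ¬ Nat.gcd n N = 1), f n
        ≤ ∑ q ∈ N.primeFactors, ∑ n ∈ (Finset.range N).filter (fun n => q ∣ n), f n := by
      refine le_trans (Finset.sum_le_sum_of_subset_of_nonneg ?_ (fun i _ _ => hf0 i))
        (sum_biUnion_le_sum _ _ f hf0)
      intro n hn
      simp only [Finset.mem_filter, Finset.mem_range] at hn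
      obtain ⟨q, hq, hqd⟩ := Nat.exists_prime_and_dvd hn.2
      refine Finset.mem_biUnion.mpr ⟨q, ?_, ?_⟩
      · exact Nat.mem_primeFactors.mpr ⟨hq, hqd.trans (Nat.gcd_dvd_right n N), hN.ne'⟩
      · exact Finset.mem_filter.mpr ⟨Finset.mem_range.mpr hn.1, hqd.trans (Nat.gcd_dvd_left n N)⟩
    -- sum of reciprocals bound
    have hrecip : ∑ q ∈ N.primeFactors, (1 : ℝ) / ((q : ℝ) * ((q : ℝ) - 1))
        ≤ 1 - (1/2 : ℝ) ^ (ω + 2) := by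
      have h1 := sum_recip N.primeFactors (fun q hq => (Nat.mem_primeFactors.mp hq).1.two_le)
      have h2 : (1/2 : ℝ) ^ (ω + 2) ≤ 1 / ((ω : ℝ) + 1) := by
        rw [div_pow, one_pow]
        apply div_le_div_of_nonneg_left (by norm_num) (by positivity)
        have hnat : ω + 1 ≤ 2 ^ (ω + 2) := by
          have := Nat.lt_two_pow_self (n := ω)
          have h2le : (2:ℕ) ^ ω ≤ 2 ^ (ω + 2) := Nat.pow_le_pow_right (by norm_num) (by omega)
          omega
        exact_mod_cast hnat
      rw [← hω] at h1
      linarith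
    -- good set lower bound
    have hsplit := Finset.sum_filter_add_sum_filter_not (Finset.range N)
      (fun n => Nat.gcd n N = 1) f
    have hbadsum : ∑ q ∈ N.primeFactors, ∑ n ∈ (Finset.range N).filter (fun n => q ∣ n), f n
        = (N : ℝ) * N.totient * ∑ q ∈ N.primeFactors, (1 : ℝ) / ((q : ℝ) * ((q : ℝ) - 1)) := by
      rw [Finset.mul_sum]
      exact Finset.sum_congr rfl hq_eq
    have hφpos : (0 : ℝ) < N.totient := by
      have := Nat.totient_pos.mpr hN
      exact_mod_cast this
    have hNpos : (0 : ℝ) < N := by exact_mod_cast hN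
    have hgood : (N : ℝ) * N.totient * (1/2 : ℝ) ^ (ω + 2)
        ≤ ∑ n ∈ (Finset.range N).filter (fun n => Nat.gcd n N = 1), f n := by
      have hb2 : ∑ n ∈ (Finset.range N).filter (fun n => ¬ Nat.gcd n N = 1), f n
          ≤ (N : ℝ) * N.totient * (1 - (1/2 : ℝ) ^ (ω + 2)) := by
        rw [hbadsum] at hbad
        refine hbad.trans ?_
        have hNφ : (0 : ℝ) ≤ (N : ℝ) * N.totient := by positivity
        exact mul_le_mul_of_nonneg_left hrecip hNφ
      nlinarith [hsplit, hPar]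
    -- cardinality of good set
    have hcard : ((Finset.range N).filter (fun n => Nat.gcd n N = 1)).card = N.totient := by
      have hset : ((Finset.range N).filter (fun n => Nat.gcd n N = 1))
          = (Finset.range N).filter N.Coprime := by
        ext x
        simp [Nat.Coprime, Nat.gcd_comm]
      rw [hset, Nat.totient]
    -- extract good n
    have hex : ∃ n ∈ (Finset.range N).filter (fun n => Nat.gcd n N = 1),
        (N : ℝ) * (1/2 : ℝ) ^ (ω + 2) ≤ f n := by
      by_contra hcon
      push_neg at hcon
      have hne : ((Finset.range N).filter (fun n => Nat.gcd n N = 1)).Nonempty := by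
        refine ⟨1, Finset.mem_filter.mpr ⟨Finset.mem_range.mpr (by omega), Nat.gcd_one_left N⟩⟩
      have hlt := Finset.sum_lt_sum_of_nonempty hne (fun i hi => hcon i hi)
      rw [Finset.sum_const, hcard, nsmul_eq_mul] at hlt
      nlinarith [hgood]
    obtain ⟨n, hnmem, hnf⟩ := hex
    obtain ⟨hnrange, hngcd⟩ := Finset.mem_filter.mp hnmem
    rw [Finset.mem_range] at hnrange
    have hn1 : 1 ≤ n := by
      rcases Nat.eq_zero_or_pos n with h0 | h1
      · subst h0
        rw [Nat.gcd_zero_left] at hngcd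
        omega
      · exact h1
    -- choose n'
    refine ⟨if n = m then n + N else n, ?_, ?_, ?_, ?_, ?_⟩
    · split <;> omega
    · split <;> omega
    · split
      · rename_i h; omega
      · rename_i h; exact h
    · split
      · rw [Nat.gcd_add_self_left]; exact hngcd
      · exact hngcd
    · -- the main bound
      have hKeq : kloosterman (m : ℤ) ((if n = m then n + N else n : ℕ) : ℤ) N
          = Kfun N (m : ℤ) (n : ℤ) := by
        rw [kloosterman_eq_Kfun]
        split
        · rw [show (((n + N : ℕ)) : ℤ) = (n : ℤ) + (N : ℤ) by push_cast; ring, Kfun_add_N]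
        · rfl
      rw [hKeq]
      have habs2 : ‖Kfun N (m : ℤ) (n : ℤ)‖ ^ 2 = f n := Complex.sq_norm _
      have hRHS2 : (Real.sqrt N / 2 ^ ((ω : ℝ) / 2 + 1)) ^ 2 = (N : ℝ) * (1/2 : ℝ) ^ (ω + 2) := by
        rw [div_pow, Real.sq_sqrt hNpos.le]
        have hp2 : ((2 : ℝ) ^ ((ω : ℝ) / 2 + 1)) ^ (2 : ℕ) = (2 : ℝ) ^ ((ω : ℝ) + 2) := by
          rw [← Real.rpow_natCast ((2 : ℝ) ^ ((ω : ℝ) / 2 + 1)) 2, ← Real.rpow_mul (by norm_num)]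
          norm_num
          ring_nf
        rw [hp2]
        have hhalf : (1/2 : ℝ) ^ (ω + 2) = 1 / (2 : ℝ) ^ ((ω : ℝ) + 2) := by
          rw [div_pow, one_pow, ← Real.rpow_natCast 2 (ω + 2)]
          push_cast
          ring_nf
        rw [hhalf]
        ring
      have hrhs_nonneg : (0 : ℝ) ≤ Real.sqrt N / 2 ^ ((ω : ℝ) / 2 + 1) := by positivity
      have habs_nonneg : (0 : ℝ) ≤ ‖Kfun N (m : ℤ) (n : ℤ)‖ := norm_nonneg _
      have h2 : (Real.sqrt N / 2 ^ ((ω : ℝ) / 2 + 1)) ^ 2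
          ≤ ‖Kfun N (m : ℤ) (n : ℤ)‖ ^ 2 := by
        rw [hRHS2, habs2]
        exact hnf
      exact (pow_le_pow_iff_left₀ hrhs_nonneg habs_nonneg (by norm_num)).mp h2
end

section
/- Let N be a square-free positive integer and let m be an integer with gcd(m, N) = 1. Then the second moment of Kloosterman sums satisfies ∑_{1 ≤ n ≤ N, gcd(n,N)=1} K(m, n, N)² ≥ N² / 2^{ω(N) + 1}. -/
open scoped BigOperators

namespace KloostermanAux

open Finset Complex ZMod
open scoped ArithmeticFunction ArithmeticFunction.Moebius ArithmeticFunction.zeta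

variable {N : ℕ} [NeZero N]

local notation "ψ" => ZMod.stdAddChar

/-- Sum over units of `ZMod N` equals sum over coprime residues in `range N`. -/
lemma sum_units_eq (f : ZMod N → ℂ) :
    ∑ u : (ZMod N)ˣ, f ↑u
      = ∑ x ∈ (Finset.range N).filter (fun x => Nat.gcd x N = 1), f (x : ZMod N) := by
  refine Finset.sum_bij' (fun (u : (ZMod N)ˣ) _ => (u : ZMod N).val)
    (fun x hx => ZMod.unitOfCoprime x (Finset.mem_filter.mp hx).2)
    ?_ (fun x hx => Finset.mem_univ _) ?_ ?_ ?_
  · intro u _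
    simp only [Finset.mem_filter, Finset.mem_range]
    exact ⟨ZMod.val_lt _, ZMod.val_coe_unit_coprime u⟩
  · intro u _
    apply Units.ext
    simp [ZMod.coe_unitOfCoprime, ZMod.natCast_val, ZMod.cast_id]
  · intro x hx
    have hlt : x < N := Finset.mem_range.mp (Finset.mem_filter.mp hx).1
    simp [ZMod.coe_unitOfCoprime, ZMod.val_natCast_of_lt hlt]
  · intro u _
    rw [ZMod.natCast_val, ZMod.cast_id]

/-- The Kloosterman sum as a sum over units. -/
lemma kloosterman_eq_sum_units (a b : ℤ) :
    kloosterman a b N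
      = ∑ x : (ZMod N)ˣ, ψ ((a : ZMod N) * (↑x : ZMod N) + (b : ZMod N) * (↑(x⁻¹) : ZMod N)) := by
  have h := sum_units_eq (N := N) (fun z => ψ ((a : ZMod N) * z + (b : ZMod N) * z⁻¹))
  rw [kloosterman]
  have h2 : ∀ x ∈ (Finset.range N).filter (fun x => Nat.gcd x N = 1),
      Complex.exp (2 * Real.pi * Complex.I *
        (((a * (x : ℤ) + b * ((((x : ZMod N)⁻¹ : ZMod N)).val : ℤ) : ℤ) : ℂ) / (N : ℂ)))
      = ψ ((a : ZMod N) * (x : ZMod N) + (b : ZMod N) * ((x : ZMod N))⁻¹) := by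
    intro x hx
    rw [show ((a : ZMod N) * (x : ZMod N) + (b : ZMod N) * ((x : ZMod N))⁻¹)
        = (((a * (x : ℤ) + b * ((((x : ZMod N)⁻¹ : ZMod N)).val : ℤ) : ℤ)) : ZMod N) by
      push_cast
      rw [ZMod.natCast_val, ZMod.cast_id]]
    rw [ZMod.stdAddChar_coe]
    ring_nf
  rw [Finset.sum_congr rfl h2, ← h]
  refine Finset.sum_congr rfl fun u _ => ?_
  rw [ZMod.inv_coe_unit]

/-- Ramanujan-type sum over units. -/
noncomputable def cc (N : ℕ) [NeZero N] (t : ZMod N) : ℂ :=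
  ∑ u : (ZMod N)ˣ, ψ ((↑u : ZMod N) * t)

lemma cc_unit_mul (v : (ZMod N)ˣ) (t : ZMod N) : cc N ((↑v : ZMod N) * t) = cc N t := by
  unfold cc
  refine Fintype.sum_equiv (Equiv.mulRight v) _ _ fun u => ?_
  simp [mul_assoc]

lemma cc_comm_form (w : ZMod N) : ∑ u : (ZMod N)ˣ, ψ (w * (↑u : ZMod N)) = cc N w := by
  unfold cc
  exact Finset.sum_congr rfl fun u _ => by rw [mul_comm]

/-- Key identity: the second moment equals `∑_z cc(1+z)²`. -/
lemma second_moment_eq {m : ℤ} (mu : (ZMod N)ˣ) (hmu : ((mu : ZMod N)) = (m : ZMod N)) :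
    ∑ n : (ZMod N)ˣ, (∑ x : (ZMod N)ˣ,
        ψ ((m : ZMod N) * (↑x : ZMod N) + (↑n : ZMod N) * (↑(x⁻¹) : ZMod N)))^2
      = ∑ z : (ZMod N)ˣ, (cc N (1 + (↑z : ZMod N)))^2 := by
  classical
  have expand : ∀ n : (ZMod N)ˣ,
      (∑ x : (ZMod N)ˣ, ψ ((m : ZMod N) * (↑x : ZMod N) + (↑n : ZMod N) * (↑(x⁻¹) : ZMod N)))^2
      = ∑ x : (ZMod N)ˣ, ∑ y : (ZMod N)ˣ,
          ψ (((m : ZMod N) * (↑x : ZMod N) + (m : ZMod N) * (↑y : ZMod N))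
            + (↑n : ZMod N) * ((↑(x⁻¹) : ZMod N) + (↑(y⁻¹) : ZMod N))) := by
    intro n
    rw [sq, Finset.sum_mul_sum]
    refine Finset.sum_congr rfl fun x _ => Finset.sum_congr rfl fun y _ => ?_
    rw [← AddChar.map_add_eq_mul]
    congr 1
    ring
  rw [Finset.sum_congr rfl fun n _ => expand n, Finset.sum_comm,
    Finset.sum_congr rfl fun x _ => Finset.sum_comm]
  have inner : ∀ x y : (ZMod N)ˣ,
      (∑ n : (ZMod N)ˣ, ψ (((m : ZMod N) * (↑x : ZMod N) + (m : ZMod N) * (↑y : ZMod N))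
          + (↑n : ZMod N) * ((↑(x⁻¹) : ZMod N) + (↑(y⁻¹) : ZMod N))))
      = ψ ((m : ZMod N) * (↑x : ZMod N) + (m : ZMod N) * (↑y : ZMod N))
          * cc N ((↑(x⁻¹) : ZMod N) + (↑(y⁻¹) : ZMod N)) := by
    intro x y
    unfold cc
    rw [Finset.mul_sum]
    exact Finset.sum_congr rfl fun nn _ => by rw [AddChar.map_add_eq_mul]
  rw [Finset.sum_congr rfl fun x _ =>
    Finset.sum_congr rfl fun y _ => inner x y, Finset.sum_comm]
  have reidx : ∀ y : (ZMod N)ˣ,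
      (∑ x : (ZMod N)ˣ, ψ ((m : ZMod N) * (↑x : ZMod N) + (m : ZMod N) * (↑y : ZMod N))
          * cc N ((↑(x⁻¹) : ZMod N) + (↑(y⁻¹) : ZMod N)))
      = ∑ z : (ZMod N)ˣ, ψ (((m : ZMod N) * ((1 : ZMod N) + (↑z : ZMod N))) * (↑y : ZMod N))
          * cc N ((1 : ZMod N) + (↑z : ZMod N)) := by
    intro y
    refine Fintype.sum_equiv (Equiv.mulRight y⁻¹) _ _ fun x => ?_
    have hy : ((↑(y⁻¹) : ZMod N)) * (↑y : ZMod N) = 1 := by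
      rw [← Units.val_mul]
      simp
    have hx : ((↑(x⁻¹) : ZMod N)) * (↑x : ZMod N) = 1 := by
      rw [← Units.val_mul]
      simp
    have hcoe : ((↑(x * y⁻¹) : ZMod N)) = (↑x : ZMod N) * (↑(y⁻¹) : ZMod N) := Units.val_mul _ _
    simp only [Equiv.coe_mulRight, hcoe]
    congr 1
    · congr 1
      have h1 : ((↑m : ZMod N) * ((↑x : ZMod N) * (↑(y⁻¹) : ZMod N))) * (↑y : ZMod N)
          = (↑m : ZMod N) * (↑x : ZMod N) := by
        rw [mul_assoc, mul_assoc, hy, mul_one]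
      rw [mul_add, mul_one, add_mul, h1, add_comm]
    · have harg : (↑(x⁻¹) : ZMod N) + (↑(y⁻¹) : ZMod N)
          = (↑(x⁻¹) : ZMod N) * ((1 : ZMod N) + (↑x : ZMod N) * (↑(y⁻¹) : ZMod N)) := by
        rw [mul_add, mul_one, ← mul_assoc, hx, one_mul]
      rw [harg, cc_unit_mul]
  rw [Finset.sum_congr rfl fun y _ => reidx y, Finset.sum_comm]
  refine Finset.sum_congr rfl fun z _ => ?_
  rw [← Finset.sum_mul, cc_comm_form, ← hmu, cc_unit_mul mu, sq]

lemma moebius_sum_indicator (k : ℕ) :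
    (if k = 1 then (1:ℂ) else 0) = ∑ d ∈ k.divisors, ((μ d : ℤ) : ℂ) := by
  have h1 : ((μ * ζ : ArithmeticFunction ℂ)) k = (1 : ArithmeticFunction ℂ) k := by
    rw [ArithmeticFunction.coe_moebius_mul_coe_zeta]
  rw [ArithmeticFunction.coe_mul_zeta_apply, ArithmeticFunction.one_apply] at h1
  rw [← h1]
  exact Finset.sum_congr rfl fun d _ => by simp

lemma divisors_gcd_eq (x : ℕ) :
    (Nat.gcd x N).divisors = N.divisors.filter (fun d => d ∣ x) := by
  ext d
  simp only [Nat.mem_divisors, Finset.mem_filter, Nat.dvd_gcd_iff]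
  constructor
  · rintro ⟨⟨h1, h2⟩, -⟩
    exact ⟨⟨h2, NeZero.ne N⟩, h1⟩
  · rintro ⟨⟨h2, -⟩, h1⟩
    refine ⟨⟨h1, h2⟩, ?_⟩
    exact Nat.gcd_ne_zero_right (NeZero.ne N)

lemma geom_part {d : ℕ} (hd : d ∣ N) (hd0 : d ≠ 0) (w : ZMod N) :
    ∑ x ∈ (Finset.range N).filter (fun x => d ∣ x), ψ ((x : ZMod N) * w)
      = if ((d : ZMod N) * w = 0) then ((N / d : ℕ) : ℂ) else 0 := by
  have hN0 : N ≠ 0 := NeZero.ne N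
  have hdpos : 0 < d := Nat.pos_of_ne_zero hd0
  -- reindex multiples of d
  have hre : ∑ x ∈ (Finset.range N).filter (fun x => d ∣ x), ψ ((x : ZMod N) * w)
      = ∑ j ∈ Finset.range (N / d), ψ (((d * j : ℕ) : ZMod N) * w) := by
    refine Finset.sum_bij' (fun x _ => x / d) (fun j _ => d * j) ?_ ?_ ?_ ?_ ?_
    · intro x hx
      obtain ⟨hx1, hx2⟩ := Finset.mem_filter.mp hx
      exact Finset.mem_range.mpr (Nat.div_lt_div_of_lt_of_dvd hd (Finset.mem_range.mp hx1))
    · intro j hj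
      refine Finset.mem_filter.mpr ⟨Finset.mem_range.mpr ?_, Dvd.intro j rfl⟩
      obtain ⟨e, rfl⟩ := hd
      rw [Nat.mul_div_cancel_left e hdpos] at hj
      exact (Nat.mul_lt_mul_left hdpos).mpr (Finset.mem_range.mp hj)
    · intro x hx
      exact Nat.mul_div_cancel' (Finset.mem_filter.mp hx).2
    · intro j _
      exact Nat.mul_div_cancel_left j hdpos
    · intro x hx
      rw [Nat.mul_div_cancel' (Finset.mem_filter.mp hx).2]
  rw [hre]
  have hterm : ∀ j : ℕ, ψ (((d * j : ℕ) : ZMod N) * w) = (ψ ((d : ZMod N) * w)) ^ j := by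
    intro j
    rw [← AddChar.map_nsmul_eq_pow]
    congr 1
    push_cast
    rw [nsmul_eq_mul]
    push_cast
    ring
  rw [Finset.sum_congr rfl fun j _ => hterm j]
  have hMpow : (ψ ((d : ZMod N) * w)) ^ (N / d) = 1 := by
    rw [← AddChar.map_nsmul_eq_pow, nsmul_eq_mul]
    have : ((N / d : ℕ) : ZMod N) * ((d : ZMod N) * w) = 0 := by
      rw [← mul_assoc, ← Nat.cast_mul, Nat.div_mul_cancel hd, ZMod.natCast_self, zero_mul]
    rw [this, AddChar.map_zero_eq_one]
  by_cases hz : (d : ZMod N) * w = 0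
  · rw [if_pos hz, hz, AddChar.map_zero_eq_one]
    simp
  · rw [if_neg hz]
    have hr : ψ ((d : ZMod N) * w) ≠ 1 := by
      intro hc
      apply hz
      have : ψ ((d : ZMod N) * w) = ψ (0 : ZMod N) := by
        rw [hc, AddChar.map_zero_eq_one]
      exact ZMod.injective_stdAddChar this
    rw [geom_sum_eq hr, hMpow]
    simp

lemma dvd_iff_div_dvd {d k : ℕ} (hd : d ∣ N) (hd0 : d ≠ 0) :
    (N ∣ d * k) ↔ (N / d ∣ k) := by
  obtain ⟨e, rfl⟩ := hd
  rw [Nat.mul_div_cancel_left e (Nat.pos_of_ne_zero hd0)]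
  exact mul_dvd_mul_iff_left hd0

lemma sum_moebius_div_mul (g : ℕ) (hg : g ≠ 0) :
    ∑ d ∈ g.divisors, μ (g / d) * (d : ℤ) = (g.totient : ℤ) := by
  have h := (ArithmeticFunction.sum_eq_iff_sum_smul_moebius_eq
    (R := ℤ) (f := fun n => (n.totient : ℤ)) (g := fun n => (n : ℤ))).mp ?_ g
      (Nat.pos_of_ne_zero hg)
  · rw [← h, Nat.sum_divisorsAntidiagonal' (f := fun a b => μ a • (b : ℤ))]
    exact Finset.sum_congr rfl fun d _ => by rw [zsmul_eq_mul]; norm_num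
  · intro n hn
    rw [← Nat.cast_sum]
    norm_cast
    exact Nat.sum_totient n

/-- Evaluation of the Ramanujan sum. -/
lemma cc_eq (hsf : Squarefree N) (w : ZMod N) :
    cc N w = (((μ (N / Nat.gcd w.val N) : ℤ) * ((Nat.gcd w.val N).totient : ℤ) : ℤ) : ℂ) := by
  have hN0 : N ≠ 0 := NeZero.ne N
  set g := Nat.gcd w.val N with hgdef
  have hgN : g ∣ N := Nat.gcd_dvd_right _ _
  have hg0 : g ≠ 0 := Nat.gcd_ne_zero_right hN0
  -- Step A/B: cc as filtered sum then indicator sum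
  have hA : cc N w = ∑ x ∈ Finset.range N,
      (if Nat.gcd x N = 1 then (1:ℂ) else 0) * ψ ((x : ZMod N) * w) := by
    unfold cc
    rw [sum_units_eq (N := N) (fun z => ψ (z * w)), Finset.sum_filter]
    exact Finset.sum_congr rfl fun x _ => by split <;> simp
  -- Step C/D: Möbius expansion
  have hC : ∀ x, (if Nat.gcd x N = 1 then (1:ℂ) else 0) * ψ ((x : ZMod N) * w)
      = ∑ d ∈ N.divisors, (if d ∣ x then ((μ d : ℤ) : ℂ) * ψ ((x : ZMod N) * w) else 0) := by
    intro x
    rw [moebius_sum_indicator (Nat.gcd x N), divisors_gcd_eq x, Finset.sum_filter,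
      Finset.sum_mul]
    exact Finset.sum_congr rfl fun d _ => by split <;> simp
  rw [hA, Finset.sum_congr rfl fun x _ => hC x, Finset.sum_comm]
  -- Step E/F: geometric evaluation
  have hE : ∀ d ∈ N.divisors,
      (∑ x ∈ Finset.range N, if d ∣ x then ((μ d : ℤ) : ℂ) * ψ ((x : ZMod N) * w) else 0)
      = ((μ d : ℤ) : ℂ) * (if (N / d) ∣ w.val then ((N / d : ℕ) : ℂ) else 0) := by
    intro d hd
    obtain ⟨hddvd, -⟩ := Nat.mem_divisors.mp hd
    have hd0 : d ≠ 0 := by rintro rfl; exact hN0 (Nat.eq_zero_of_zero_dvd hddvd)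
    rw [← Finset.sum_filter, ← Finset.mul_sum, geom_part hddvd hd0 w]
    congr 1
    have hcond : ((d : ZMod N) * w = 0) ↔ ((N / d) ∣ w.val) := by
      rw [show (d : ZMod N) * w = ((d * w.val : ℕ) : ZMod N) by
        push_cast; rw [ZMod.natCast_val, ZMod.cast_id],
        ZMod.natCast_eq_zero_iff, dvd_iff_div_dvd hddvd hd0]
    split
    · rw [if_pos (hcond.mp (by assumption))]
    · rw [if_neg (fun hc => (by assumption : ¬ _) (hcond.mpr hc))]
  rw [Finset.sum_congr rfl hE]
  -- Step H: reindex d ↦ N / d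
  have hH : ∑ d ∈ N.divisors, ((μ d : ℤ) : ℂ) * (if (N / d) ∣ w.val then ((N / d : ℕ) : ℂ) else 0)
      = ∑ d ∈ N.divisors, ((μ (N / d) : ℤ) : ℂ) * (if d ∣ w.val then ((d : ℕ) : ℂ) else 0) := by
    rw [← Nat.sum_div_divisors N (fun d => ((μ (N / d) : ℤ) : ℂ) * (if d ∣ w.val then ((d : ℕ) : ℂ) else 0))]
    refine Finset.sum_congr rfl fun d hd => ?_
    obtain ⟨hddvd, -⟩ := Nat.mem_divisors.mp hd
    rw [Nat.div_div_self hddvd hN0]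
  rw [hH]
  -- Step I: restrict to divisors of g
  have hI : ∑ d ∈ N.divisors, ((μ (N / d) : ℤ) : ℂ) * (if d ∣ w.val then ((d : ℕ) : ℂ) else 0)
      = ∑ d ∈ g.divisors, ((μ (N / d) : ℤ) : ℂ) * ((d : ℕ) : ℂ) := by
    rw [hgdef, divisors_gcd_eq (N := N) w.val, Finset.sum_filter]
    exact Finset.sum_congr rfl fun d _ => by split <;> simp
  rw [hI]
  -- Step J: split the Möbius factor
  have hJ : ∀ d ∈ g.divisors, ((μ (N / d) : ℤ) : ℂ) * ((d : ℕ) : ℂ)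
      = ((μ (N / g) : ℤ) : ℂ) * (((μ (g / d) : ℤ) : ℂ) * ((d : ℕ) : ℂ)) := by
    intro d hd
    obtain ⟨hdg, -⟩ := Nat.mem_divisors.mp hd
    have hd0 : d ≠ 0 := by rintro rfl; exact hg0 (Nat.eq_zero_of_zero_dvd hdg)
    have hsplit : N / d = (N / g) * (g / d) := by
      rw [Nat.div_mul_div_comm hgN hdg, mul_comm N g, Nat.mul_div_mul_left _ _ (Nat.pos_of_ne_zero hg0)]
    have hcop : (N / g).Coprime (g / d) := by
      have hNg : N = g * (N / g) := (Nat.mul_div_cancel' hgN).symm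
      have hsq : Squarefree (g * (N / g)) := hNg ▸ hsf
      have := (Nat.squarefree_mul_iff.mp hsq).1
      exact Nat.Coprime.coprime_dvd_right (Nat.div_dvd_of_dvd hdg) this.symm
    rw [hsplit, ArithmeticFunction.isMultiplicative_moebius.map_mul_of_coprime hcop]
    push_cast
    ring
  rw [Finset.sum_congr rfl hJ, ← Finset.mul_sum]
  have hK : ∑ d ∈ g.divisors, (((μ (g / d) : ℤ) : ℂ) * ((d : ℕ) : ℂ)) = ((g.totient : ℤ) : ℂ) := by
    rw [show ((g.totient : ℤ) : ℂ) = ((∑ d ∈ g.divisors, μ (g / d) * (d : ℤ) : ℤ) : ℂ) by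
      rw [sum_moebius_div_mul g hg0]]
    push_cast
    rfl
  rw [hK]
  push_cast
  ring

lemma moebius_sq {k : ℕ} (hk : Squarefree k) : (μ k) * (μ k) = 1 := by
  rw [ArithmeticFunction.moebius_apply_of_squarefree hk, ← pow_add, ← two_mul, pow_mul]
  norm_num

/-- The second moment as a natural number. -/
lemma sum_cc_sq (hsf : Squarefree N) :
    ∑ z : (ZMod N)ˣ, (cc N (1 + (↑z : ZMod N)))^2
      = ((∑ z : (ZMod N)ˣ, ((Nat.gcd ((1 + (↑z : ZMod N)).val) N).totient)^2 : ℕ) : ℂ) := by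
  push_cast
  refine Finset.sum_congr rfl fun z _ => ?_
  rw [cc_eq hsf]
  have hsq : Squarefree (N / Nat.gcd ((1 + (↑z : ZMod N)).val) N) :=
    hsf.squarefree_of_dvd (Nat.div_dvd_of_dvd (Nat.gcd_dvd_right _ _))
  have hm2 : ((μ (N / Nat.gcd ((1 + (↑z : ZMod N)).val) N) : ℤ) : ℂ)^2 = 1 := by
    rw [sq, ← Int.cast_mul, moebius_sq hsq, Int.cast_one]
  push_cast
  rw [mul_pow, hm2, one_mul]

/-- The counting function `F`. -/
def Fc : ℕ → ℕ
  | 0 => 0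
  | (n+1) => ∑ z : (ZMod (n+1))ˣ, ((Nat.gcd ((1 + (↑z : ZMod (n+1))).val) (n+1)).totient)^2

lemma Fc_eq (M : ℕ) [NeZero M] :
    Fc M = ∑ z : (ZMod M)ˣ, ((Nat.gcd ((1 + (↑z : ZMod M)).val) M).totient)^2 := by
  cases M with
  | zero => exact absurd rfl (NeZero.ne 0)
  | succ n => rfl

lemma gcd_mul_coprime {a b : ℕ} (hab : Nat.Coprime a b) (k : ℕ) :
    Nat.gcd k (a * b) = Nat.gcd k a * Nat.gcd k b := by
  have hx : Nat.gcd k (a * b) ∣ a * b := Nat.gcd_dvd_right _ _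
  have h := (Nat.gcd_mul_gcd_eq_iff_dvd_mul_of_coprime hab).mpr hx
  rw [Nat.gcd_assoc, Nat.gcd_assoc, Nat.gcd_eq_right (dvd_mul_right a b),
    Nat.gcd_eq_right (dvd_mul_left b a)] at h
  exact h.symm

set_option maxHeartbeats 2000000 in
lemma Fc_mul {a b : ℕ} (ha : a ≠ 0) (hb : b ≠ 0) (hab : Nat.Coprime a b) :
    Fc (a * b) = Fc a * Fc b := by
  haveI : NeZero a := ⟨ha⟩
  haveI : NeZero b := ⟨hb⟩
  haveI : NeZero (a * b) := ⟨mul_ne_zero ha hb⟩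
  rw [Fc_eq, Fc_eq, Fc_eq]
  set crt := ZMod.chineseRemainder hab with hcrt
  have hfst : ∀ w : ZMod (a * b), (crt w).1 = ((w.val : ℕ) : ZMod a) := by
    have hhom : (RingHom.fst (ZMod a) (ZMod b)).comp (crt : ZMod (a * b) →+* ZMod a × ZMod b)
        = ZMod.castHom (dvd_mul_right a b) (ZMod a) := RingHom.ext_zmod _ _
    intro w
    have := congrArg (fun f => f w) hhom
    simp only [RingHom.comp_apply, RingHom.coe_fst] at this
    rw [ZMod.castHom_apply, ← ZMod.natCast_val] at this
    exact this
  have hsnd : ∀ w : ZMod (a * b), (crt w).2 = ((w.val : ℕ) : ZMod b) := by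
    have hhom : (RingHom.snd (ZMod a) (ZMod b)).comp (crt : ZMod (a * b) →+* ZMod a × ZMod b)
        = ZMod.castHom (dvd_mul_left b a) (ZMod b) := RingHom.ext_zmod _ _
    intro w
    have := congrArg (fun f => f w) hhom
    simp only [RingHom.comp_apply, RingHom.coe_snd] at this
    rw [ZMod.castHom_apply, ← ZMod.natCast_val] at this
    exact this
  have key : ∀ w : ZMod (a * b),
      (Nat.gcd w.val (a * b)).totient ^ 2
        = (Nat.gcd ((crt w).1.val) a).totient ^ 2 * (Nat.gcd ((crt w).2.val) b).totient ^ 2 := by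
    intro w
    rw [hfst w, hsnd w, ZMod.val_natCast, ZMod.val_natCast]
    have g1 : Nat.gcd (w.val % a) a = Nat.gcd w.val a :=
      (Nat.gcd_rec a w.val).symm.trans (Nat.gcd_comm a w.val)
    have g2 : Nat.gcd (w.val % b) b = Nat.gcd w.val b :=
      (Nat.gcd_rec b w.val).symm.trans (Nat.gcd_comm b w.val)
    have hcop : (Nat.gcd w.val a).Coprime (Nat.gcd w.val b) :=
      Nat.Coprime.coprime_dvd_right (Nat.gcd_dvd_right w.val b)
        (Nat.Coprime.coprime_dvd_left (Nat.gcd_dvd_right w.val a) hab)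
    rw [g1, g2, gcd_mul_coprime hab, Nat.totient_mul hcop, mul_pow]
  let E : (ZMod (a * b))ˣ ≃ (ZMod a)ˣ × (ZMod b)ˣ :=
    (Units.mapEquiv crt.toMulEquiv).toEquiv.trans (MulEquiv.prodUnits).toEquiv
  have hE1 : ∀ z : (ZMod (a * b))ˣ, ((↑((E z).1) : ZMod a)) = (crt (↑z : ZMod (a * b))).1 := by
    intro z
    simp [E, MulEquiv.prodUnits, Units.coe_mapEquiv]
  have hE2 : ∀ z : (ZMod (a * b))ˣ, ((↑((E z).2) : ZMod b)) = (crt (↑z : ZMod (a * b))).2 := by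
    intro z
    simp [E, MulEquiv.prodUnits, Units.coe_mapEquiv]
  rw [Finset.sum_mul_sum]
  rw [show (∑ u : (ZMod a)ˣ, ∑ v : (ZMod b)ˣ,
      ((Nat.gcd ((1 + (↑u : ZMod a)).val) a).totient)^2 * ((Nat.gcd ((1 + (↑v : ZMod b)).val) b).totient)^2)
      = ∑ p : (ZMod a)ˣ × (ZMod b)ˣ,
      ((Nat.gcd ((1 + (↑(p.1) : ZMod a)).val) a).totient)^2 * ((Nat.gcd ((1 + (↑(p.2) : ZMod b)).val) b).totient)^2
      from (Fintype.sum_prod_type (f := fun p : (ZMod a)ˣ × (ZMod b)ˣ =>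
        ((Nat.gcd ((1 + (↑(p.1) : ZMod a)).val) a).totient)^2
          * ((Nat.gcd ((1 + (↑(p.2) : ZMod b)).val) b).totient)^2)).symm]
  refine Fintype.sum_equiv E _ _ fun z => ?_
  have hone : ((1 : ZMod a) + (↑((E z).1) : ZMod a)) = (crt ((1 : ZMod (a * b)) + (↑z : ZMod (a * b)))).1 := by
    rw [hE1 z, map_add, map_one]
    rfl
  have hone2 : ((1 : ZMod b) + (↑((E z).2) : ZMod b)) = (crt ((1 : ZMod (a * b)) + (↑z : ZMod (a * b)))).2 := by
    rw [hE2 z, map_add, map_one]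
    rfl
  rw [key ((1 : ZMod (a * b)) + (↑z : ZMod (a * b))), hone, hone2]

lemma Fc_one : Fc 1 = 1 := by
  haveI : NeZero 1 := ⟨one_ne_zero⟩
  rw [Fc_eq]
  rw [Finset.sum_congr rfl (fun z _ => by rw [Nat.gcd_one_right, Nat.totient_one, one_pow])]
  simp

lemma Fc_prime {p : ℕ} (hp : p.Prime) : Fc p = (p - 1)^2 + (p - 2) := by
  haveI : Fact p.Prime := ⟨hp⟩
  haveI : NeZero p := ⟨hp.ne_zero⟩
  rw [Fc_eq]
  have hmem : (-1 : (ZMod p)ˣ) ∈ (Finset.univ : Finset (ZMod p)ˣ) := Finset.mem_univ _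
  rw [← Finset.sum_erase_add _ _ hmem]
  have hval : ((1 : ZMod p) + (↑(-1 : (ZMod p)ˣ) : ZMod p)) = 0 := by
    simp
  have hterm : ((Nat.gcd ((1 + (↑(-1 : (ZMod p)ˣ) : ZMod p)).val) p).totient)^2 = (p - 1)^2 := by
    rw [hval]
    simp [ZMod.val_zero, Nat.totient_prime hp]
  have hrest : ∀ z ∈ (Finset.univ : Finset (ZMod p)ˣ).erase (-1),
      ((Nat.gcd ((1 + (↑z : ZMod p)).val) p).totient)^2 = 1 := by
    intro z hz
    have hzne : z ≠ -1 := (Finset.mem_erase.mp hz).1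
    have hne : (1 : ZMod p) + (↑z : ZMod p) ≠ 0 := by
      intro hc
      apply hzne
      apply Units.ext
      have : (↑z : ZMod p) = -1 := by linear_combination hc
      simpa using this
    have hv0 : ((1 : ZMod p) + (↑z : ZMod p)).val ≠ 0 := fun hc => hne (ZMod.val_eq_zero _ |>.mp hc)
    have hvlt : ((1 : ZMod p) + (↑z : ZMod p)).val < p := ZMod.val_lt _
    have hcop : Nat.gcd ((1 + (↑z : ZMod p)).val) p = 1 := by
      rw [Nat.gcd_comm]
      refine (Nat.Prime.coprime_iff_not_dvd hp).mpr fun hdvd => ?_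
      exact absurd (Nat.le_of_dvd (Nat.pos_of_ne_zero hv0) hdvd) (not_le.mpr hvlt)
    rw [hcop, Nat.totient_one, one_pow]
  rw [Finset.sum_congr rfl hrest, hterm, Finset.sum_const, smul_eq_mul, mul_one,
    Finset.card_erase_of_mem hmem, Finset.card_univ, ZMod.card_units_eq_totient,
    Nat.totient_prime hp]
  have h2 : 2 ≤ p := hp.two_le
  omega

lemma Fc_squarefree (hN : N ≠ 0) (hsf : Squarefree N) :
    Fc N = ∏ p ∈ N.primeFactors, ((p - 1)^2 + (p - 2)) := by
  let f : ArithmeticFunction ℕ := ⟨Fc, rfl⟩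
  have hmult : f.IsMultiplicative := by
    constructor
    · exact Fc_one
    · intro x y hxy
      rcases eq_or_ne x 0 with rfl | hx
      · have : y = 1 := by simpa using hxy
        subst this
        show Fc 0 = Fc 0 * Fc 1
        simp [f, Fc_one, Fc]
      rcases eq_or_ne y 0 with rfl | hy
      · have : x = 1 := by simpa [Nat.coprime_zero_right] using hxy
        subst this
        show Fc 0 = Fc 1 * Fc 0
        simp [f, Fc_one, Fc]
      exact Fc_mul hx hy hxy
  have h1 : f N = Fc N := rfl
  rw [← h1, ← Nat.prod_primeFactors_of_squarefree hsf,
    hmult.map_prod_of_prime _ (fun p hp => Nat.prime_of_mem_primeFactors hp)]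
  rw [Nat.prod_primeFactors_of_squarefree hsf]
  exact Finset.prod_congr rfl fun p hp => Fc_prime (Nat.prime_of_mem_primeFactors hp)

end KloostermanAux

/-- Lower bound for the second moment of Kloosterman sums modulo a square-free `N`:
`∑_{1 ≤ n ≤ N, gcd(n,N)=1} K(m,n,N)² ≥ N² / 2^{ω(N)+1}` (the sums `K(m,n,N)` being real). -/
theorem kloosterman_second_moment_lower (N : ℕ) (hN : 0 < N) (hsf : Squarefree N)
    (m : ℤ) (hmN : Int.gcd m (N : ℤ) = 1) :
    (N : ℝ) ^ 2 / 2 ^ (N.primeFactors.card + 1) ≤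
      (∑ n ∈ (Finset.Icc 1 N).filter (fun n => Nat.gcd n N = 1),
        (kloosterman m (n : ℤ) N) ^ 2).re := by
  haveI : NeZero N := ⟨hN.ne'⟩
  classical
  -- a unit representing m
  have hco : Nat.Coprime m.natAbs N := by
    have h' : Int.gcd m (N : ℤ) = m.natAbs.gcd N := by simp [Int.gcd]
    rwa [h'] at hmN
  obtain ⟨mu, hmu⟩ : ∃ mu : (ZMod N)ˣ, ((mu : ZMod N)) = ((m : ℤ) : ZMod N) := by
    rcases Int.natAbs_eq m with h | h
    · refine ⟨ZMod.unitOfCoprime m.natAbs hco, ?_⟩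
      rw [ZMod.coe_unitOfCoprime, h, Int.cast_natCast]
      simp [Int.natAbs_abs]
    · refine ⟨-ZMod.unitOfCoprime m.natAbs hco, ?_⟩
      rw [Units.val_neg, ZMod.coe_unitOfCoprime, h, Int.cast_neg, Int.cast_natCast]
      simp [Int.natAbs_abs]
  -- step 1: rewrite the sum as a sum over units
  have hstep1 : ∑ n ∈ (Finset.Icc 1 N).filter (fun n => Nat.gcd n N = 1),
      (kloosterman m (n : ℤ) N) ^ 2
      = ∑ n : (ZMod N)ˣ, (∑ x : (ZMod N)ˣ,
          ZMod.stdAddChar (((m : ℤ) : ZMod N) * (↑x : ZMod N)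
            + (↑n : ZMod N) * (↑(x⁻¹) : ZMod N)))^2 := by
    refine Finset.sum_bij'
      (fun n hn => ZMod.unitOfCoprime n (Finset.mem_filter.mp hn).2)
      (fun u _ => if ((↑u : ZMod N)).val = 0 then N else ((↑u : ZMod N)).val)
      (fun n hn => Finset.mem_univ _) ?_ ?_ ?_ ?_
    · -- j maps into the Icc filter
      intro u _
      by_cases h0 : ((↑u : ZMod N)).val = 0
      · have hu0 : (↑u : ZMod N) = 0 := (ZMod.val_eq_zero _).mp h0
        have h1 : ((1 : ℕ) : ZMod N) = 0 := by
          have := u.mul_inv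
          rw [hu0] at this
          simpa using this.symm
        have hN1 : N = 1 := Nat.dvd_one.mp ((ZMod.natCast_eq_zero_iff 1 N).mp h1)
        rw [if_pos h0]
        subst hN1
        simp
      · rw [if_neg h0]
        refine Finset.mem_filter.mpr ⟨Finset.mem_Icc.mpr
          ⟨Nat.one_le_iff_ne_zero.mpr h0, le_of_lt (ZMod.val_lt _)⟩, ?_⟩
        exact ZMod.val_coe_unit_coprime u
    · -- left inverse
      intro n hn
      obtain ⟨hn1, hn2⟩ := Finset.mem_filter.mp hn
      obtain ⟨hge, hle⟩ := Finset.mem_Icc.mp hn1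
      rcases lt_or_eq_of_le hle with hlt | heq
      · have hval : ((ZMod.unitOfCoprime n hn2 : ZMod N)).val = n := by
          rw [ZMod.coe_unitOfCoprime, ZMod.val_natCast_of_lt hlt]
        rw [hval, if_neg (by omega)]
      · -- n = N forces N = 1
        have hNN : Nat.gcd N N = 1 := heq ▸ hn2
        rw [Nat.gcd_self] at hNN
        subst hNN
        have : n = 1 := le_antisymm hle hge
        subst this
        simp
    · -- right inverse
      intro u _
      apply Units.ext
      by_cases h0 : ((↑u : ZMod N)).val = 0
      · rw [ZMod.coe_unitOfCoprime]
        simp only [h0, if_pos]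
        rw [ZMod.natCast_self]
        exact ((ZMod.val_eq_zero _).mp h0).symm
      · rw [ZMod.coe_unitOfCoprime]
        simp only [h0, if_neg, if_false]
        rw [ZMod.natCast_val, ZMod.cast_id]
    · -- term equality
      intro n hn
      rw [KloostermanAux.kloosterman_eq_sum_units m (n : ℤ)]
      congr 1
      refine Finset.sum_congr rfl fun x _ => ?_
      congr 2
      rw [ZMod.coe_unitOfCoprime]
      push_cast
      rfl
  rw [hstep1, KloostermanAux.second_moment_eq mu hmu, KloostermanAux.sum_cc_sq hsf,
    ← KloostermanAux.Fc_eq N]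
  rw [Complex.natCast_re]
  -- final inequality over the reals
  rw [KloostermanAux.Fc_squarefree (NeZero.ne N) hsf]
  have hNprod : ∏ p ∈ N.primeFactors, p = N := Nat.prod_primeFactors_of_squarefree hsf
  rw [div_le_iff₀ (by positivity)]
  have hLHS : (N : ℝ) ^ 2 = ∏ p ∈ N.primeFactors, (p : ℝ)^2 := by
    conv_lhs => rw [← hNprod]
    push_cast
    rw [Finset.prod_pow]
  have hRHS : ((∏ p ∈ N.primeFactors, ((p - 1)^2 + (p - 2)) : ℕ) : ℝ)
        * 2 ^ (N.primeFactors.card + 1)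
      = 2 * ∏ p ∈ N.primeFactors, (2 * (((p - 1)^2 + (p - 2) : ℕ) : ℝ)) := by
    rw [Finset.prod_mul_distrib, Finset.prod_const]
    push_cast
    ring
  rw [hLHS, hRHS]
  have hterm : ∀ p ∈ N.primeFactors, p ≠ 2 → (p : ℝ)^2 ≤ 2 * (((p - 1)^2 + (p - 2) : ℕ) : ℝ) := by
    intro p hp hp2
    have hprime := Nat.prime_of_mem_primeFactors hp
    have hp3 : 3 ≤ p := by
      rcases hprime.two_le.lt_or_eq with h | h
      · omega
      · omega
    have hc1 : ((p - 1 : ℕ) : ℝ) = (p : ℝ) - 1 := by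
      push_cast [Nat.cast_sub (by omega : 1 ≤ p)]
      ring
    have hc2 : ((p - 2 : ℕ) : ℝ) = (p : ℝ) - 2 := by
      push_cast [Nat.cast_sub (by omega : 2 ≤ p)]
      ring
    push_cast [hc1, hc2]
    have hp3' : (3 : ℝ) ≤ (p : ℝ) := by exact_mod_cast hp3
    nlinarith
  by_cases h2 : 2 ∈ N.primeFactors
  · rw [← Finset.mul_prod_erase _ _ h2, ← Finset.mul_prod_erase _ _ h2]
    have hv2 : (2 * ((((2:ℕ) - 1)^2 + ((2:ℕ) - 2) : ℕ) : ℝ)) = 2 := by norm_num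
    rw [hv2]
    have hprod : ∏ p ∈ N.primeFactors.erase 2, (p : ℝ)^2
        ≤ ∏ p ∈ N.primeFactors.erase 2, (2 * (((p - 1)^2 + (p - 2) : ℕ) : ℝ)) := by
      refine Finset.prod_le_prod (fun p _ => by positivity) ?_
      intro p hp
      exact hterm p (Finset.mem_of_mem_erase hp) (Finset.ne_of_mem_erase hp)
    calc ((2:ℕ) : ℝ)^2 * ∏ p ∈ N.primeFactors.erase 2, (p : ℝ)^2
        ≤ ((2:ℕ) : ℝ)^2 * ∏ p ∈ N.primeFactors.erase 2, (2 * (((p - 1)^2 + (p - 2) : ℕ) : ℝ)) := by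
          refine mul_le_mul_of_nonneg_left hprod (by positivity)
      _ = 2 * (2 * ∏ p ∈ N.primeFactors.erase 2, (2 * (((p - 1)^2 + (p - 2) : ℕ) : ℝ))) := by
          norm_num
          ring
  · have hprod : ∏ p ∈ N.primeFactors, (p : ℝ)^2
        ≤ ∏ p ∈ N.primeFactors, (2 * (((p - 1)^2 + (p - 2) : ℕ) : ℝ)) := by
      refine Finset.prod_le_prod (fun p _ => by positivity) ?_
      intro p hp
      exact hterm p hp (fun hc => h2 (hc ▸ hp))
    refine hprod.trans ?_
    refine le_mul_of_one_le_left (Finset.prod_nonneg fun p _ => by positivity) one_le_two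
end
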